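/- arXiv:1708.02814 — 3 statements merged into one kernel-verified Lean document; each statement's English description precedes it below -/
import Mathlib

section
/- Let κ be regular uncountable with λ⁺ < κ, where λ is regular. Fix a bijection H : κ → 2^{λ⁺}, and define F : κ^κ → (2^κ)^{λ⁺} by F(f) = (f_γ)_{γ<λ⁺} with f_γ(α) = H(f(α))(γ). Then F is a continuous reduction of E^{κ,κ}_{λ-club} to the λ⁺-fold product relation Π_{λ⁺} E^{2,κ}_{λ-club}: that is, f E^{κ,κ}_{λ-club} g if and only if for every γ < λ⁺, f_γ E^{2,κ}_{λ-club} g_γ. -/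
namespace GDST
open Set

/-- `C` is unbounded in `κ`. -/
def unboundedIn (C : Set Ordinal) (κ : Ordinal) : Prop :=
  ∀ α < κ, ∃ β ∈ C, α ≤ β ∧ β < κ

/-- `C` is closed in `κ`: any `α < κ` which is a limit of elements of `C` belongs to `C`. -/
def closedIn (C : Set Ordinal) (κ : Ordinal) : Prop :=
  ∀ α < κ, 0 < α → (∀ β < α, ∃ γ ∈ C, β ≤ γ ∧ γ < α) → α ∈ C

/-- `C` is a club (closed unbounded) subset of `κ`. -/
def clubIn (C : Set Ordinal) (κ : Ordinal) : Prop := unboundedIn C κ ∧ closedIn C κ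

/-- `S` is stationary in `κ`: it meets every club of `κ`. -/
def stationaryIn (S : Set Ordinal) (κ : Ordinal) : Prop :=
  ∀ C, clubIn C κ → (S ∩ C).Nonempty

/-- `S^κ_μ`, the set of ordinals below `κ` of cofinality `μ`. -/
def cofSet (κ : Ordinal) (μ : Cardinal) : Set Ordinal := {α | α < κ ∧ Ordinal.cof α = μ}

/-- `α` is an (infinite) regular cardinal. -/
def isRegOrd (α : Ordinal) : Prop := Cardinal.aleph0 ≤ α.cof ∧ α.cof.ord = α

/-- `reg(κ)`, the set of regular cardinals below `κ`. -/
def regSet (κ : Ordinal) : Set Ordinal := {α | α < κ ∧ isRegOrd α}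

/-- The equivalence modulo the nonstationary ideal restricted to `S`, on `κ^κ`. -/
def Ediff (κ : Ordinal) (S : Set Ordinal) (η ξ : Ordinal → Ordinal) : Prop :=
  ¬ stationaryIn ({α | α < κ ∧ η α ≠ ξ α} ∩ S) κ

/-- The equivalence modulo the nonstationary ideal restricted to `S`, on `2^κ`. -/
def Ediff2 (κ : Ordinal) (S : Set Ordinal) (η ξ : Ordinal → Bool) : Prop :=
  ¬ stationaryIn ({α | α < κ ∧ η α ≠ ξ α} ∩ S) κ

/-- Continuity in the bounded topology, for `F : κ^κ → κ^κ`. -/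
def contFunKK (κ : Ordinal) (F : (Ordinal → Ordinal) → (Ordinal → Ordinal)) : Prop :=
  ∀ η, ∀ α < κ, ∃ β < κ, ∀ ξ, (∀ γ < β, ξ γ = η γ) → ∀ γ < α, F ξ γ = F η γ

def contFunK2 (κ : Ordinal) (F : (Ordinal → Ordinal) → (Ordinal → Bool)) : Prop :=
  ∀ η, ∀ α < κ, ∃ β < κ, ∀ ξ, (∀ γ < β, ξ γ = η γ) → ∀ γ < α, F ξ γ = F η γ

def contFun22 (κ : Ordinal) (F : (Ordinal → Bool) → (Ordinal → Bool)) : Prop :=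
  ∀ η, ∀ α < κ, ∃ β < κ, ∀ ξ, (∀ γ < β, ξ γ = η γ) → ∀ γ < α, F ξ γ = F η γ

/-- Continuous reducibility for relations on `κ^κ`. -/
def contRedKK (κ : Ordinal)
    (E₁ E₂ : (Ordinal → Ordinal) → (Ordinal → Ordinal) → Prop) : Prop :=
  ∃ F, contFunKK κ F ∧ ∀ η ξ, E₁ η ξ ↔ E₂ (F η) (F ξ)

def contRedK2 (κ : Ordinal)
    (E₁ : (Ordinal → Ordinal) → (Ordinal → Ordinal) → Prop)
    (E₂ : (Ordinal → Bool) → (Ordinal → Bool) → Prop) : Prop :=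
  ∃ F, contFunK2 κ F ∧ ∀ η ξ, E₁ η ξ ↔ E₂ (F η) (F ξ)

def contRed22 (κ : Ordinal)
    (E₁ E₂ : (Ordinal → Bool) → (Ordinal → Bool) → Prop) : Prop :=
  ∃ F, contFun22 κ F ∧ ∀ η ξ, E₁ η ξ ↔ E₂ (F η) (F ξ)

/-- `X` strongly reflects to `Y`. -/
def stronglyReflects (κ : Ordinal) (X Y : Set Ordinal) : Prop :=
  ∀ Z ⊆ X, stationaryIn Z κ →
    stationaryIn {α | α ∈ Y ∧ stationaryIn (Z ∩ Set.Iio α) α} κ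

/-- `D` witnesses that `X` ⋄-reflects to `Y`. -/
def diamondWitness (κ : Ordinal) (X Y : Set Ordinal) (D : Ordinal → Set Ordinal) : Prop :=
  (∀ α ∈ Y, D α ⊆ Set.Iio α ∧ stationaryIn (D α) α) ∧
  ∀ Z ⊆ X, stationaryIn Z κ → stationaryIn {α | α ∈ Y ∧ D α = Z ∩ Set.Iio α} κ

/-- `X` ⋄-reflects to `Y`. -/
def diamondReflects (κ : Ordinal) (X Y : Set Ordinal) : Prop :=
  ∃ D, diamondWitness κ X Y D

/-- `f` witnesses the `S`-dual diamond on `κ`. -/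
def dualDiamondWitness (κ : Ordinal) (S : Set Ordinal)
    (f : Ordinal → Ordinal → Ordinal) : Prop :=
  (∀ α, ∀ β < α, f α β < α) ∧
  ∀ Z ⊆ S, stationaryIn Z κ → ∀ g : Ordinal → Ordinal,
    stationaryIn
      {α | α ∈ regSet κ ∧ (∀ β < α, g β = f α β) ∧ stationaryIn (Z ∩ Set.Iio α) α} κ

/-- `κ` has the `S`-dual diamond. -/
def dualDiamond (κ : Ordinal) (S : Set Ordinal) : Prop :=
  ∃ f, dualDiamondWitness κ S f

end GDST

namespace GDST

/-- Continuity of `F : κ^κ → (2^κ)^{λ⁺}` with respect to the box topology on the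
`λ⁺`-fold product. -/
def contFunProd (κ lp : Ordinal)
    (F : (Ordinal → Ordinal) → Ordinal → Ordinal → Bool) : Prop :=
  ∀ η, ∀ a : Ordinal → Ordinal, (∀ γ < lp, a γ < κ) →
    ∃ β < κ, ∀ ξ, (∀ δ < β, ξ δ = η δ) →
      ∀ γ < lp, ∀ δ < a γ, F ξ γ δ = F η γ δ

lemma not_stationary_iff {Z : Set Ordinal} {κ : Ordinal} :
    ¬ stationaryIn Z κ ↔ ∃ C, clubIn C κ ∧ Z ∩ C = ∅ := by
  unfold stationaryIn
  push_neg
  simp [Set.not_nonempty_iff_eq_empty]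

/-- An intersection of fewer than `c` many clubs in `c.ord` is a club, for `c` regular
uncountable. -/
lemma inter_club {c : Cardinal} (hreg : c.IsRegular) (hunc : Cardinal.aleph0 < c)
    {o : Ordinal} (ho : o.card < c)
    (C : ∀ γ, γ < o → Set Ordinal) (hC : ∀ γ hγ, clubIn (C γ hγ) c.ord) :
    clubIn {β | ∀ γ (hγ : γ < o), β ∈ C γ hγ} c.ord := by
  have hcof : c.ord.cof = c := hreg.cof_eq
  have hlim : Order.IsSuccLimit c.ord := Cardinal.isSuccLimit_ord hreg.aleph0_le
  constructor
  · -- unbounded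
    intro α hα
    classical
    -- pick, for each club, an element above a given ordinal
    set pick : ∀ γ, γ < o → Ordinal → Ordinal := fun γ hγ β =>
      if h : β < c.ord then ((hC γ hγ).1 β h).choose else 0 with hpick
    have pick_spec : ∀ γ hγ β (h : β < c.ord),
        pick γ hγ β ∈ C γ hγ ∧ β ≤ pick γ hγ β ∧ pick γ hγ β < c.ord := by
      intro γ hγ β h
      have := ((hC γ hγ).1 β h).choose_spec
      simp only [hpick, dif_pos h]
      exact ⟨this.1, this.2.1, this.2.2⟩
    -- the step function
    set step : Ordinal → Ordinal := fun β =>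
      max β (Ordinal.bsup o (fun γ hγ => pick γ hγ β)) + 1 with hstep
    have step_lt : ∀ β < c.ord, step β < c.ord := by
      intro β hβ
      apply hlim.succ_lt
      apply max_lt hβ
      apply Ordinal.bsup_lt_ord (by rwa [hcof])
      intro γ hγ
      exact (pick_spec γ hγ β hβ).2.2
    have lt_step : ∀ β, β < step β := fun β =>
      lt_of_le_of_lt (le_max_left _ _) (Order.lt_succ _)
    have pick_le_step : ∀ γ hγ β, pick γ hγ β < step β := by
      intro γ hγ β
      exact lt_of_le_of_lt ((Ordinal.le_bsup _ γ hγ).trans (le_max_right _ _))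
        (Order.lt_succ _)
    -- the ω-sequence
    set s : ℕ → Ordinal := fun n => Nat.rec α (fun _ β => step β) n with hs
    have hs0 : s 0 = α := rfl
    have hssucc : ∀ n, s (n + 1) = step (s n) := fun n => rfl
    have hsκ : ∀ n, s n < c.ord := by
      intro n
      induction n with
      | zero => exact hα
      | succ n ih => rw [hssucc]; exact step_lt _ ih
    have hsmono : ∀ n, s n < s (n + 1) := by
      intro n; rw [hssucc]; exact lt_step _
    set β' : Ordinal := ⨆ n, s n with hβ'
    have hsle : ∀ n, s n ≤ β' := fun n => Ordinal.le_iSup s n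
    have hβ'κ : β' < c.ord :=
      Ordinal.iSup_lt_ord_lift (f := s)
        (by rw [hcof, Cardinal.mk_nat, Cardinal.lift_aleph0]; exact hunc) hsκ
    have hβ'pos : 0 < β' := lt_of_le_of_lt (zero_le (a := s 0))
      (lt_of_lt_of_le (hsmono 0) (hsle 1))
    refine ⟨β', ?_, (hs0 ▸ hsle 0 : α ≤ β'), hβ'κ⟩
    intro γ hγ
    apply (hC γ hγ).2 β' hβ'κ hβ'pos
    intro β hβ
    rw [hβ', Ordinal.lt_iSup_iff] at hβ
    obtain ⟨n, hn⟩ := hβ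
    refine ⟨pick γ hγ (s n), (pick_spec γ hγ (s n) (hsκ n)).1,
      hn.le.trans (pick_spec γ hγ (s n) (hsκ n)).2.1, ?_⟩
    calc pick γ hγ (s n) < step (s n) := pick_le_step γ hγ (s n)
      _ = s (n + 1) := (hssucc n).symm
      _ ≤ β' := hsle (n + 1)
  · -- closed
    intro α hα hαpos hlimit γ hγ
    apply (hC γ hγ).2 α hα hαpos
    intro β hβ
    obtain ⟨δ, hδ, hβδ, hδα⟩ := hlimit β hβ
    exact ⟨δ, hδ γ hγ, hβδ, hδα⟩

/-- Given a bijection `H : κ → 2^{λ⁺}`, the map `f ↦ (γ ↦ (α ↦ H(f α) γ))` is a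
continuous reduction of `E^{κ,κ}_{λ-club}` to `Π_{λ⁺} E^{2,κ}_{λ-club}`. -/
theorem prod_reduction (κ l : Cardinal) (hκreg : κ.IsRegular)
    (hκunc : Cardinal.aleph0 < κ) (hpow : Cardinal.powerlt κ κ = κ)
    (hlreg : l.IsRegular) (hlp : (Order.succ l).ord < κ.ord)
    (H : Ordinal → Ordinal → Bool)
    (Hinj : ∀ β < κ.ord, ∀ β' < κ.ord,
      (∀ γ < (Order.succ l).ord, H β γ = H β' γ) → β = β')
    (Hsurj : ∀ s : Ordinal → Bool, ∃ β < κ.ord, ∀ γ < (Order.succ l).ord, H β γ = s γ) :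
    contFunProd κ.ord (Order.succ l).ord (fun f γ α => H (f α) γ) ∧
    ∀ f g : Ordinal → Ordinal, (∀ α < κ.ord, f α < κ.ord) → (∀ α < κ.ord, g α < κ.ord) →
      (Ediff κ.ord (cofSet κ.ord l) f g ↔
        ∀ γ < (Order.succ l).ord,
          Ediff2 κ.ord (cofSet κ.ord l) (fun α => H (f α) γ) (fun α => H (g α) γ)) := by
  classical
  have hcof : κ.ord.cof = κ := hκreg.cof_eq
  have hlim : Order.IsSuccLimit κ.ord := Cardinal.isSuccLimit_ord hκreg.aleph0_le
  have hlpcard : ((Order.succ l).ord).card < κ := by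
    rw [Cardinal.card_ord]
    exact Cardinal.ord_lt_ord.mp hlp
  constructor
  · -- continuity
    intro η a ha
    refine ⟨Ordinal.bsup (Order.succ l).ord (fun γ hγ => a γ) + 1, ?_, ?_⟩
    · apply hlim.succ_lt
      apply Ordinal.bsup_lt_ord (by rwa [hcof])
      intro γ hγ
      exact ha γ hγ
    · intro ξ hξ γ hγ δ hδ
      have : δ < Ordinal.bsup (Order.succ l).ord (fun γ hγ => a γ) + 1 :=
        lt_of_lt_of_le hδ ((Ordinal.le_bsup _ γ hγ).trans (Order.le_succ _))
      show H (ξ δ) γ = H (η δ) γ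
      rw [hξ δ this]
  · -- the reduction
    intro f g hf hg
    constructor
    · -- forward
      intro hfg γ hγ
      rw [Ediff, not_stationary_iff] at hfg
      rw [Ediff2, not_stationary_iff]
      obtain ⟨C, hclub, hdisj⟩ := hfg
      refine ⟨C, hclub, ?_⟩
      rw [Set.eq_empty_iff_forall_notMem]
      rintro α ⟨⟨⟨hακ, hne⟩, hαS⟩, hαC⟩
      have hfgα : f α ≠ g α := by
        intro h
        exact hne (by rw [h])
      have : α ∈ ({α | α < κ.ord ∧ f α ≠ g α} ∩ cofSet κ.ord l) ∩ C :=
        ⟨⟨⟨hακ, hfgα⟩, hαS⟩, hαC⟩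
      rw [hdisj] at this
      exact this
    · -- backward
      intro h
      rw [Ediff, not_stationary_iff]
      have hchoice : ∀ γ (hγ : γ < (Order.succ l).ord), ∃ C, clubIn C κ.ord ∧
          ({α | α < κ.ord ∧ H (f α) γ ≠ H (g α) γ} ∩ cofSet κ.ord l) ∩ C = ∅ := by
        intro γ hγ
        have := h γ hγ
        rwa [Ediff2, not_stationary_iff] at this
      set C : ∀ γ, γ < (Order.succ l).ord → Set Ordinal :=
        fun γ hγ => (hchoice γ hγ).choose with hCdef
      have hCclub : ∀ γ hγ, clubIn (C γ hγ) κ.ord := fun γ hγ =>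
        (hchoice γ hγ).choose_spec.1
      have hCdisj : ∀ γ hγ,
          ({α | α < κ.ord ∧ H (f α) γ ≠ H (g α) γ} ∩ cofSet κ.ord l) ∩ C γ hγ = ∅ :=
        fun γ hγ => (hchoice γ hγ).choose_spec.2
      refine ⟨{β | ∀ γ (hγ : γ < (Order.succ l).ord), β ∈ C γ hγ},
        inter_club hκreg hκunc hlpcard C hCclub, ?_⟩
      rw [Set.eq_empty_iff_forall_notMem]
      rintro α ⟨⟨⟨hακ, hne⟩, hαS⟩, hαD⟩
      have : ¬ ∀ γ < (Order.succ l).ord, H (f α) γ = H (g α) γ := by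
        intro hall
        exact hne (Hinj (f α) (hf α hακ) (g α) (hg α hακ) hall)
      push_neg at this
      obtain ⟨γ, hγ, hγne⟩ := this
      have : α ∈ ({α | α < κ.ord ∧ H (f α) γ ≠ H (g α) γ} ∩ cofSet κ.ord l) ∩ C γ hγ :=
        ⟨⟨⟨hακ, hγne⟩, hαS⟩, hαD γ hγ⟩
      rw [hCdisj γ hγ] at this
      exact this

end GDST
end

section
/- For every stationary S ⊆ κ (κ regular uncountable), the relation E^{2,κ}_S is continuously reducible to NS, the equivalence on 2^κ modulo the non-stationary ideal, via the map F(η)(α) = η(α) if α ∈ S and F(η)(α) = 1 otherwise. -/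
namespace GDST

/-- Equivalence modulo the nonstationary ideal on `2^κ`. -/
def NSrel (κ : Ordinal) (η ξ : Ordinal → Bool) : Prop :=
  ¬ stationaryIn {α | α < κ ∧ η α ≠ ξ α} κ

/-- For every stationary `S ⊆ κ`, the map `F(η)(α) = η(α)` for `α ∈ S`, `= 1`
otherwise, is a continuous reduction of `E^{2,κ}_S` to `NS`. -/
theorem Ediff2_contRed_NS (κ : Cardinal) (hκreg : κ.IsRegular)
    (hκunc : Cardinal.aleph0 < κ) (S : Set Ordinal) (hSsub : S ⊆ Set.Iio κ.ord)
    (hS : stationaryIn S κ.ord) :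
    contFun22 κ.ord
      (fun η α => @ite _ (α ∈ S) (Classical.propDecidable _) (η α) true) ∧
    ∀ η ξ : Ordinal → Bool,
      Ediff2 κ.ord S η ξ ↔
        NSrel κ.ord (fun α => @ite _ (α ∈ S) (Classical.propDecidable _) (η α) true)
          (fun α => @ite _ (α ∈ S) (Classical.propDecidable _) (ξ α) true) := by
  constructor
  · intro η α hα
    exact ⟨α, hα, fun ξ hξ γ hγ => by
      simp only []
      by_cases h : γ ∈ S
      · simp [h, hξ γ hγ]
      · simp [h]⟩
  · intro η ξ
    unfold Ediff2 NSrel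
    have hset : {α | α < κ.ord ∧ η α ≠ ξ α} ∩ S =
        {α | α < κ.ord ∧
          (@ite _ (α ∈ S) (Classical.propDecidable _) (η α) true) ≠
          (@ite _ (α ∈ S) (Classical.propDecidable _) (ξ α) true)} := by
      ext α
      constructor
      · rintro ⟨⟨h1, h2⟩, hs⟩
        exact ⟨h1, by simp [hs]; exact h2⟩
      · rintro ⟨h1, h2⟩
        by_cases hs : α ∈ S
        · simp [hs] at h2
          exact ⟨⟨h1, h2⟩, hs⟩
        · simp [hs] at h2
    rw [hset]

end GDST
end

section
/- Let κ be inaccessible and let ⟨A^f_i⟩_{i≤κ} be the increasing chain of structures in K built from f : κ → reg(κ) as in the paper, where at each limit stage i a copy of ℚ × f(i)* (ℚ ordered rationals times f(i) with reversed order, ordered antilexicographically) is appended on top together with a new point of C. If f, g : κ → reg(κ) agree on a club of κ, then the resulting dense linear orders A^f = (L^{A^f_κ}, <) and A^g = (L^{A^g_κ}, <) are isomorphic. -/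
namespace GDST

universe u

/-- A structure in the vocabulary `{L, C, <, R}`. -/
structure KStr (U : Type u) where
  L : Set U
  C : Set U
  lt : U → U → Prop
  R : U → U → Prop

namespace KStr

variable {U : Type u}

/-- The domain of the structure. -/
def dom (A : KStr U) : Set U := A.L ∪ A.C

/-- Membership in the class `K`: `L` and `C` are disjoint, `<` is a dense linear
order without endpoints on `L`, `R ⊆ L × C`, and for every `x ∈ C`, `R(·,x)`
determines a cut of `L`: a nonempty lower set without a largest element whose
(nonempty) complement has no least element. -/
def memK (A : KStr U) : Prop :=
  (A.L ∩ A.C = ∅) ∧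
  (∀ x y, A.lt x y → x ∈ A.L ∧ y ∈ A.L) ∧
  (∀ x ∈ A.L, ¬ A.lt x x) ∧
  (∀ x y z, A.lt x y → A.lt y z → A.lt x z) ∧
  (∀ x ∈ A.L, ∀ y ∈ A.L, x ≠ y → A.lt x y ∨ A.lt y x) ∧
  (∀ x y, A.lt x y → ∃ z, A.lt x z ∧ A.lt z y) ∧
  (∀ x ∈ A.L, ∃ y, A.lt x y) ∧
  (∀ x ∈ A.L, ∃ y, A.lt y x) ∧
  (∀ x y, A.R x y → x ∈ A.L ∧ y ∈ A.C) ∧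
  (∀ y ∈ A.C,
    (∃ x, A.R x y) ∧
    (∃ x ∈ A.L, ¬ A.R x y) ∧
    (∀ x, A.R x y → ∃ z, A.R z y ∧ A.lt x z) ∧
    (∀ x ∈ A.L, ¬ A.R x y → ∃ z ∈ A.L, ¬ A.R z y ∧ A.lt z x) ∧
    (∀ x z, A.R z y → A.lt x z → A.R x y))

/-- The strong substructure relation `A ⪯ B` on `K`. -/
def strongSub (A B : KStr U) : Prop :=
  A.L ⊆ B.L ∧ A.C ⊆ B.C ∧
  (∀ x ∈ A.L, ∀ y ∈ A.L, (A.lt x y ↔ B.lt x y)) ∧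
  (∀ x ∈ A.L, ∀ y ∈ A.C, (A.R x y ↔ B.R x y)) ∧
  (∀ y ∈ A.C, ∀ x, (B.R x y ↔ x ∈ B.L ∧ ∃ z, A.R z y ∧ B.lt x z)) ∧
  (∀ y ∈ A.C, ∀ x ∈ B.L, (¬ B.R x y ↔ ∃ z ∈ A.L, ¬ A.R z y ∧ B.lt z x)) ∧
  (∀ y ∈ B.C, y ∉ A.C → ∃ u v, B.R u y ∧ v ∈ B.L ∧ ¬ B.R v y ∧
    ∀ a ∈ A.L, B.lt a u ∨ B.lt v a)

end KStr

end GDST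

namespace GDST

namespace KStr

/-- The union of (an initial segment of) a chain of structures. -/
def unionChain (A : Ordinal → KStr Ordinal) (i : Ordinal) : KStr Ordinal where
  L := ⋃ j ∈ Set.Iio i, (A j).L
  C := ⋃ j ∈ Set.Iio i, (A j).C
  lt := fun x y => ∃ j < i, (A j).lt x y
  R := fun x y => ∃ j < i, (A j).R x y

/-- Pushforward of a structure along a map. -/
def mapK (F : Ordinal → Ordinal) (A : KStr Ordinal) : KStr Ordinal where
  L := F '' A.L
  C := F '' A.C
  lt := fun x y => ∃ a ∈ A.L, ∃ b ∈ A.L, F a = x ∧ F b = y ∧ A.lt a b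
  R := fun x y => ∃ a ∈ A.L, ∃ b ∈ A.C, F a = x ∧ F b = y ∧ A.R a b

end KStr

/-- `B`, linearly ordered by `lt'`, is order isomorphic to `ℚ × δ*`, i.e. to
`ℚ × δ` where `δ` carries the reversed order, ordered antilexicographically. -/
def isQtimesRevBlock (lt' : Ordinal.{0} → Ordinal.{0} → Prop) (B : Set Ordinal.{0})
    (δ : Ordinal.{0}) : Prop :=
  ∃ e : Ordinal.{0} → ℚ × Ordinal.{0}, Set.BijOn e B {p : ℚ × Ordinal.{0} | p.2 < δ} ∧
    ∀ x ∈ B, ∀ y ∈ B,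
      (lt' x y ↔ ((e y).2 < (e x).2 ∨ ((e x).2 = (e y).2 ∧ (e x).1 < (e y).1)))

open KStr in
/-- The specification of the chain `⟨A^f_i⟩_{i ≤ κ}` of structures in `K` built
from `f : κ → reg(κ)` as in the paper: a continuous `⪯`-increasing chain of
structures of size `< κ`, starting from `(ℚ, ∅)`, appending at each limit stage
`i < κ` a block `ℚ × f(i)*` on top together with one new `C`-point cutting above
everything old, and realizing (cofinally) every small strong extension of every
stage. -/
def chainSpec (κ : Ordinal) (f : Ordinal → Ordinal)
    (A : Ordinal → KStr Ordinal) : Prop :=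
  (∀ i ≤ κ, memK (A i)) ∧
  (∀ i j, i < j → j ≤ κ → strongSub (A i) (A j)) ∧
  (∀ i < κ, Cardinal.mk (dom (A i)) < Cardinal.lift.{1,0} κ.card) ∧
  ((A 0).C = ∅ ∧ isQtimesRevBlock (A 0).lt (A 0).L 1) ∧
  (∀ i < κ, Order.IsSuccLimit i →
    (∃ x, x ∉ (unionChain A i).C ∧ (A i).C = (unionChain A i).C ∪ {x} ∧
      ∀ y, ((A i).R y x ↔ y ∈ (unionChain A i).L)) ∧
    (∀ b ∈ (A i).L \ (unionChain A i).L, ∀ a ∈ (unionChain A i).L, (A i).lt a b) ∧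
    isQtimesRevBlock (A i).lt ((A i).L \ (unionChain A i).L) (f i)) ∧
  ((A κ).L = (unionChain A κ).L ∧ (A κ).C = (unionChain A κ).C) ∧
  (∀ i < κ, ∀ Cs : KStr Ordinal, memK Cs → strongSub (A i) Cs →
    Cardinal.mk (dom Cs) < Cardinal.lift.{1,0} κ.card →
    ∃ j, i ≤ j ∧ j < κ ∧ ∃ F : Ordinal → Ordinal,
      Set.InjOn F (dom Cs) ∧ Set.EqOn F id (dom (A i)) ∧
      strongSub (mapK F Cs) (A j))

end GDST

namespace GDST
open Set Function
namespace KStr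

variable {A B C : KStr Ordinal.{0}} {F G : Ordinal → Ordinal}

theorem ext' (hL : A.L = B.L) (hC : A.C = B.C) (hlt : A.lt = B.lt) (hR : A.R = B.R) :
    A = B := by
  cases A; cases B; simp_all

/-! ### memK accessors -/

theorem memK.ltL (h : memK A) : ∀ x y, A.lt x y → x ∈ A.L ∧ y ∈ A.L := h.2.1
theorem memK.irrefl (h : memK A) : ∀ x ∈ A.L, ¬ A.lt x x := h.2.2.1
theorem memK.lt_trans (h : memK A) : ∀ x y z, A.lt x y → A.lt y z → A.lt x z := h.2.2.2.1
theorem memK.total (h : memK A) :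
    ∀ x ∈ A.L, ∀ y ∈ A.L, x ≠ y → A.lt x y ∨ A.lt y x := h.2.2.2.2.1
theorem memK.RLC (h : memK A) : ∀ x y, A.R x y → x ∈ A.L ∧ y ∈ A.C := h.2.2.2.2.2.2.2.2.1
theorem memK.cut (h : memK A) : ∀ y ∈ A.C,
    (∃ x, A.R x y) ∧
    (∃ x ∈ A.L, ¬ A.R x y) ∧
    (∀ x, A.R x y → ∃ z, A.R z y ∧ A.lt x z) ∧
    (∀ x ∈ A.L, ¬ A.R x y → ∃ z ∈ A.L, ¬ A.R z y ∧ A.lt z x) ∧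
    (∀ x z, A.R z y → A.lt x z → A.R x y) := h.2.2.2.2.2.2.2.2.2

theorem memK.irrefl' (h : memK A) {x : Ordinal} (hxx : A.lt x x) : False :=
  h.irrefl x (h.ltL _ _ hxx).1 hxx

theorem memK.asymm (h : memK A) {x y : Ordinal} (h1 : A.lt x y) (h2 : A.lt y x) : False :=
  h.irrefl' (h.lt_trans _ _ _ h1 h2)

theorem memK.notC (h : memK A) {x : Ordinal} (hx : x ∈ A.L) : x ∉ A.C := fun hc =>
  (Set.eq_empty_iff_forall_notMem.1 h.1 x) ⟨hx, hc⟩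

theorem memK.notL (h : memK A) {x : Ordinal} (hx : x ∈ A.C) : x ∉ A.L := fun hl =>
  (Set.eq_empty_iff_forall_notMem.1 h.1 x) ⟨hl, hx⟩

/-! ### strongSub accessors -/

theorem strongSub.Lsub (h : strongSub A B) : A.L ⊆ B.L := h.1
theorem strongSub.Csub (h : strongSub A B) : A.C ⊆ B.C := h.2.1
theorem strongSub.ltIff (h : strongSub A B) :
    ∀ x ∈ A.L, ∀ y ∈ A.L, (A.lt x y ↔ B.lt x y) := h.2.2.1
theorem strongSub.RIff (h : strongSub A B) :
    ∀ x ∈ A.L, ∀ y ∈ A.C, (A.R x y ↔ B.R x y) := h.2.2.2.1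
theorem strongSub.Rchar (h : strongSub A B) :
    ∀ y ∈ A.C, ∀ x, (B.R x y ↔ x ∈ B.L ∧ ∃ z, A.R z y ∧ B.lt x z) := h.2.2.2.2.1
theorem strongSub.nRchar (h : strongSub A B) :
    ∀ y ∈ A.C, ∀ x ∈ B.L, (¬ B.R x y ↔ ∃ z ∈ A.L, ¬ A.R z y ∧ B.lt z x) := h.2.2.2.2.2.1
theorem strongSub.newC (h : strongSub A B) :
    ∀ y ∈ B.C, y ∉ A.C → ∃ u v, B.R u y ∧ v ∈ B.L ∧ ¬ B.R v y ∧
      ∀ a ∈ A.L, B.lt a u ∨ B.lt v a := h.2.2.2.2.2.2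

theorem strongSub.domSub (h : strongSub A B) : dom A ⊆ dom B :=
  Set.union_subset_union h.Lsub h.Csub

theorem strongSub_refl (hA : memK A) : strongSub A A := by
  refine ⟨Set.Subset.rfl, Set.Subset.rfl, fun _ _ _ _ => Iff.rfl, fun _ _ _ _ => Iff.rfl,
    ?_, ?_, fun y hy hy' => absurd hy hy'⟩
  · intro y hy x
    constructor
    · intro hR
      exact ⟨(hA.RLC _ _ hR).1, (hA.cut y hy).2.2.1 x hR⟩
    · rintro ⟨-, z, hz, hlt⟩
      exact (hA.cut y hy).2.2.2.2 x z hz hlt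
  · intro y hy x hx
    constructor
    · intro hnR
      exact (hA.cut y hy).2.2.2.1 x hx hnR
    · rintro ⟨z, hzL, hznR, hlt⟩ hR
      exact hznR ((hA.cut y hy).2.2.2.2 z x hR hlt)

theorem strongSub_trans (hA : memK A) (hB : memK B) (hC : memK C)
    (hAB : strongSub A B) (hBC : strongSub B C) : strongSub A C := by
  refine ⟨hAB.Lsub.trans hBC.Lsub, hAB.Csub.trans hBC.Csub, ?_, ?_, ?_, ?_, ?_⟩
  · intro x hx y hy
    exact (hAB.ltIff x hx y hy).trans (hBC.ltIff x (hAB.Lsub hx) y (hAB.Lsub hy))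
  · intro x hx y hy
    exact (hAB.RIff x hx y hy).trans (hBC.RIff x (hAB.Lsub hx) y (hAB.Csub hy))
  · intro y hy x
    rw [hBC.Rchar y (hAB.Csub hy) x]
    constructor
    · rintro ⟨hxL, z, hzR, hlt⟩
      obtain ⟨hzL, w, hwR, hltzw⟩ := (hAB.Rchar y hy z).1 hzR
      refine ⟨hxL, w, hwR, hC.lt_trans _ _ _ hlt ?_⟩
      exact (hBC.ltIff z hzL w (hAB.Lsub (hA.RLC _ _ hwR).1)).1 hltzw
    · rintro ⟨hxL, z, hzR, hlt⟩
      exact ⟨hxL, z, (hAB.RIff z (hA.RLC _ _ hzR).1 y hy).1 hzR, hlt⟩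
  · intro y hy x hx
    rw [hBC.nRchar y (hAB.Csub hy) x hx]
    constructor
    · rintro ⟨z, hzL, hznR, hlt⟩
      obtain ⟨w, hwL, hwnR, hltwz⟩ := (hAB.nRchar y hy z hzL).1 hznR
      refine ⟨w, hwL, hwnR, hC.lt_trans _ _ _ ?_ hlt⟩
      exact (hBC.ltIff w (hAB.Lsub hwL) z hzL).1 hltwz
    · rintro ⟨z, hzL, hznR, hlt⟩
      exact ⟨z, hAB.Lsub hzL, fun hR => hznR ((hAB.RIff z hzL y hy).2 hR), hlt⟩
  · intro y hy hynA
    by_cases hyB : y ∈ B.C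
    · obtain ⟨u, v, huR, hvL, hvnR, hbd⟩ := hAB.newC y hyB hynA
      have huL : u ∈ B.L := (hB.RLC _ _ huR).1
      refine ⟨u, v, (hBC.RIff u huL y hyB).1 huR, hBC.Lsub hvL,
        fun hR => hvnR ((hBC.RIff v hvL y hyB).2 hR), ?_⟩
      intro a ha
      rcases hbd a ha with h1 | h1
      · exact Or.inl ((hBC.ltIff a (hAB.Lsub ha) u huL).1 h1)
      · exact Or.inr ((hBC.ltIff v hvL a (hAB.Lsub ha)).1 h1)
    · obtain ⟨u, v, huR, hvL, hvnR, hbd⟩ := hBC.newC y hy hyB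
      exact ⟨u, v, huR, hvL, hvnR, fun a ha => hbd a (hAB.Lsub ha)⟩

end KStr
end GDST

namespace GDST
open Set Function
namespace KStr

variable {A B : KStr Ordinal.{0}} {F G : Ordinal → Ordinal}

theorem dom_mapK : dom (mapK F A) = F '' dom A := by
  simp [dom, mapK, Set.image_union]

theorem mapK_L : (mapK F A).L = F '' A.L := rfl
theorem mapK_C : (mapK F A).C = F '' A.C := rfl

theorem mapK_lt_iff (hltL : ∀ x y, A.lt x y → x ∈ A.L ∧ y ∈ A.L)
    (hF : InjOn F (dom A)) {a b : Ordinal} (ha : a ∈ dom A) (hb : b ∈ dom A) :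
    (mapK F A).lt (F a) (F b) ↔ A.lt a b := by
  constructor
  · rintro ⟨a', ha', b', hb', hea, heb, hlt⟩
    rwa [hF (Or.inl ha') ha hea, hF (Or.inl hb') hb heb] at hlt
  · intro hlt
    exact ⟨a, (hltL _ _ hlt).1, b, (hltL _ _ hlt).2, rfl, rfl, hlt⟩

theorem mapK_R_iff (hRLC : ∀ x y, A.R x y → x ∈ A.L ∧ y ∈ A.C)
    (hF : InjOn F (dom A)) {a c : Ordinal} (ha : a ∈ dom A) (hc : c ∈ dom A) :
    (mapK F A).R (F a) (F c) ↔ A.R a c := by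
  constructor
  · rintro ⟨a', ha', c', hc', hea, hec, hR⟩
    rwa [hF (Or.inl ha') ha hea, hF (Or.inr hc') hc hec] at hR
  · intro hR
    exact ⟨a, (hRLC _ _ hR).1, c, (hRLC _ _ hR).2, rfl, rfl, hR⟩

theorem mapK_memK (hA : memK A) (hF : InjOn F (dom A)) : memK (mapK F A) := by
  have hlt := fun {a b} => mapK_lt_iff (A := A) (F := F) hA.ltL hF (a := a) (b := b)
  have hR := fun {a c} => mapK_R_iff (A := A) (F := F) hA.RLC hF (a := a) (c := c)
  refine ⟨?_, ?_, ?_, ?_, ?_, ?_, ?_, ?_, ?_, ?_⟩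
  · ext x
    simp only [mapK_L, mapK_C, Set.mem_inter_iff, Set.mem_image, Set.mem_empty_iff_false,
      iff_false]
    rintro ⟨⟨a, ha, rfl⟩, ⟨c, hc, hca⟩⟩
    rw [hF (Or.inr hc) (Or.inl ha) hca] at hc
    exact hA.notC ha hc
  · rintro x y ⟨a, ha, b, hb, rfl, rfl, -⟩
    exact ⟨⟨a, ha, rfl⟩, ⟨b, hb, rfl⟩⟩
  · rintro x ⟨a, ha, rfl⟩ hxx
    exact hA.irrefl a ha ((hlt (Or.inl ha) (Or.inl ha)).1 hxx)
  · rintro x y z ⟨a, ha, b, hb, rfl, rfl, hab⟩ hyz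
    obtain ⟨b', hb', c, hc, heb, rfl, hbc⟩ := hyz
    rw [hF (Or.inl hb') (Or.inl hb) heb] at hbc
    exact ⟨a, ha, c, hc, rfl, rfl, hA.lt_trans _ _ _ hab hbc⟩
  · rintro x ⟨a, ha, rfl⟩ y ⟨b, hb, rfl⟩ hne
    have hab : a ≠ b := fun h => hne (by rw [h])
    rcases hA.total a ha b hb hab with h | h
    · exact Or.inl ⟨a, ha, b, hb, rfl, rfl, h⟩
    · exact Or.inr ⟨b, hb, a, ha, rfl, rfl, h⟩
  · rintro x y ⟨a, ha, b, hb, rfl, rfl, hab⟩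
    obtain ⟨z, h1, h2⟩ := hA.2.2.2.2.2.1 a b hab
    have hz := hA.ltL _ _ h1
    exact ⟨F z, ⟨a, ha, z, hz.2, rfl, rfl, h1⟩, ⟨z, hz.2, b, hb, rfl, rfl, h2⟩⟩
  · rintro x ⟨a, ha, rfl⟩
    obtain ⟨y, hy⟩ := hA.2.2.2.2.2.2.1 a ha
    exact ⟨F y, a, ha, y, (hA.ltL _ _ hy).2, rfl, rfl, hy⟩
  · rintro x ⟨a, ha, rfl⟩
    obtain ⟨y, hy⟩ := hA.2.2.2.2.2.2.2.1 a ha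
    exact ⟨F y, y, (hA.ltL _ _ hy).1, a, ha, rfl, rfl, hy⟩
  · rintro x y ⟨a, ha, c, hc, rfl, rfl, -⟩
    exact ⟨⟨a, ha, rfl⟩, ⟨c, hc, rfl⟩⟩
  · rintro y ⟨c, hc, rfl⟩
    obtain ⟨⟨x0, hx0⟩, ⟨x1, hx1L, hx1⟩, hnomax, hnomin, hdown⟩ := hA.cut c hc
    have hx0m := hA.RLC _ _ hx0
    refine ⟨⟨F x0, x0, hx0m.1, c, hc, rfl, rfl, hx0⟩, ?_, ?_, ?_, ?_⟩
    · exact ⟨F x1, ⟨x1, hx1L, rfl⟩,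
        fun h => hx1 ((hR (Or.inl hx1L) (Or.inr hc)).1 h)⟩
    · rintro x ⟨a, haL, c', hc'C, rfl, heqc, hRac⟩
      rw [hF (Or.inr hc'C) (Or.inr hc) heqc] at hRac
      obtain ⟨z, hz1, hz2⟩ := hnomax a hRac
      have hzL := (hA.RLC _ _ hz1).1
      exact ⟨F z, ⟨z, hzL, c, hc, rfl, rfl, hz1⟩,
        ⟨a, haL, z, hzL, rfl, rfl, hz2⟩⟩
    · rintro x ⟨a, haL, rfl⟩ hnR
      have hnRa : ¬ A.R a c := fun h => hnR ⟨a, haL, c, hc, rfl, rfl, h⟩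
      obtain ⟨z, hzL, hznR, hzlt⟩ := hnomin a haL hnRa
      exact ⟨F z, ⟨z, hzL, rfl⟩,
        fun h => hznR ((hR (Or.inl hzL) (Or.inr hc)).1 h),
        ⟨z, hzL, a, haL, rfl, rfl, hzlt⟩⟩
    · rintro x z ⟨b, hbL, c', hc'C, rfl, heqc, hRbc⟩ hlt2
      rw [hF (Or.inr hc'C) (Or.inr hc) heqc] at hRbc
      obtain ⟨a, haL, b', hb'L, rfl, heqb, hab⟩ := hlt2
      rw [hF (Or.inl hb'L) (Or.inl hbL) heqb] at hab
      exact ⟨a, haL, c, hc, rfl, rfl, hdown a b hRbc hab⟩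

end KStr
end GDST

namespace GDST
open Set Function
namespace KStr

variable {A B : KStr Ordinal.{0}} {F G : Ordinal.{0} → Ordinal.{0}}

theorem mapK_comp : mapK G (mapK F A) = mapK (fun x => G (F x)) A := by
  apply ext'
  · simp [mapK_L, Set.image_image]
  · simp [mapK_C, Set.image_image]
  · funext x y
    simp only [mapK, eq_iff_iff]
    constructor
    · rintro ⟨a', ⟨a, ha, rfl⟩, b', ⟨b, hb, rfl⟩, hea, heb, a0, ha0, b0, hb0, he0, he1, hlt⟩
      exact ⟨a0, ha0, b0, hb0, by rw [he0, hea], by rw [he1, heb], hlt⟩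
    · rintro ⟨a, ha, b, hb, rfl, rfl, hlt⟩
      exact ⟨F a, ⟨a, ha, rfl⟩, F b, ⟨b, hb, rfl⟩, rfl, rfl, a, ha, b, hb, rfl, rfl, hlt⟩
  · funext x y
    simp only [mapK, eq_iff_iff]
    constructor
    · rintro ⟨a', ⟨a, ha, rfl⟩, b', ⟨b, hb, rfl⟩, hea, heb, a0, ha0, b0, hb0, he0, he1, hRR⟩
      exact ⟨a0, ha0, b0, hb0, by rw [he0, hea], by rw [he1, heb], hRR⟩
    · rintro ⟨a, ha, b, hb, rfl, rfl, hRR⟩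
      exact ⟨F a, ⟨a, ha, rfl⟩, F b, ⟨b, hb, rfl⟩, rfl, rfl, a, ha, b, hb, rfl, rfl, hRR⟩

theorem mapK_eqOn_id (hA : memK A) (hF : EqOn F id (dom A)) : mapK F A = A := by
  have hL : ∀ a ∈ A.L, F a = a := fun a ha => hF (Or.inl ha)
  have hC : ∀ a ∈ A.C, F a = a := fun a ha => hF (Or.inr ha)
  refine ext' ?_ ?_ ?_ ?_
  · rw [mapK_L]; exact Set.image_congr hL ▸ Set.image_id A.L
  · rw [mapK_C]; exact Set.image_congr hC ▸ Set.image_id A.C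
  · funext x y
    simp only [mapK, eq_iff_iff]
    constructor
    · rintro ⟨a, ha, b, hb, rfl, rfl, hlt⟩
      rwa [hL a ha, hL b hb]
    · intro hlt
      obtain ⟨hx, hy⟩ := hA.ltL _ _ hlt
      exact ⟨x, hx, y, hy, hL x hx, hL y hy, hlt⟩
  · funext x y
    simp only [mapK, eq_iff_iff]
    constructor
    · rintro ⟨a, ha, b, hb, rfl, rfl, hRR⟩
      rwa [hL a ha, hC b hb]
    · intro hRR
      obtain ⟨hx, hy⟩ := hA.RLC _ _ hRR
      exact ⟨x, hx, y, hy, hL x hx, hC y hy, hRR⟩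

theorem strongSub_map (hA : memK A) (hB : memK B) (hAB : strongSub A B)
    (hF : InjOn F (dom B)) : strongSub (mapK F A) (mapK F B) := by
  have hFA : InjOn F (dom A) := hF.mono hAB.domSub
  have hltA := fun {a b} ha hb => mapK_lt_iff (A := A) (F := F) hA.ltL hFA (a := a) (b := b) ha hb
  have hltB := fun {a b} ha hb => mapK_lt_iff (A := B) (F := F) hB.ltL hF (a := a) (b := b) ha hb
  have hRA := fun {a c} ha hc => mapK_R_iff (A := A) (F := F) hA.RLC hFA (a := a) (c := c) ha hc
  have hRB := fun {a c} ha hc => mapK_R_iff (A := B) (F := F) hB.RLC hF (a := a) (c := c) ha hc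
  refine ⟨Set.image_mono hAB.Lsub, Set.image_mono hAB.Csub, ?_, ?_, ?_, ?_, ?_⟩
  · rintro x ⟨a, ha, rfl⟩ y ⟨b, hb, rfl⟩
    rw [hltA (Or.inl ha) (Or.inl hb),
      hltB (Or.inl (hAB.Lsub ha)) (Or.inl (hAB.Lsub hb))]
    exact hAB.ltIff a ha b hb
  · rintro x ⟨a, ha, rfl⟩ y ⟨c, hc, rfl⟩
    rw [hRA (Or.inl ha) (Or.inr hc),
      hRB (Or.inl (hAB.Lsub ha)) (Or.inr (hAB.Csub hc))]
    exact hAB.RIff a ha c hc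
  · rintro y ⟨c, hc, rfl⟩ x
    constructor
    · rintro ⟨b, hbL, c', hc'C, rfl, heq, hRbc⟩
      rw [hF (Or.inr hc'C) (Or.inr (hAB.Csub hc)) heq] at hRbc
      obtain ⟨hbBL, z, hzR, hlt⟩ := (hAB.Rchar c hc b).1 hRbc
      have hzAL := (hA.RLC _ _ hzR).1
      refine ⟨⟨b, hbBL, rfl⟩, F z, (hRA (Or.inl hzAL) (Or.inr hc)).2 hzR, ?_⟩
      exact (hltB (Or.inl hbBL) (Or.inl (hAB.Lsub hzAL))).2 hlt
    · rintro ⟨⟨b, hbL, rfl⟩, z', ⟨z, hzL, c', hc'C, rfl, heq, hzR⟩, hlt⟩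
      rw [hFA (Or.inr hc'C) (Or.inr hc) heq] at hzR
      have hzBL : z ∈ B.L := hAB.Lsub (hA.RLC _ _ hzR).1
      have hlt' := (hltB (Or.inl hbL) (Or.inl hzBL)).1 hlt
      have := (hAB.Rchar c hc b).2 ⟨hbL, z, hzR, hlt'⟩
      exact (hRB (Or.inl hbL) (Or.inr (hAB.Csub hc))).2 this
  · rintro y ⟨c, hc, rfl⟩ x ⟨b, hbL, rfl⟩
    rw [show ¬ (mapK F B).R (F b) (F c) ↔ ¬ B.R b c from
      not_congr (hRB (Or.inl hbL) (Or.inr (hAB.Csub hc)))]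
    rw [hAB.nRchar c hc b hbL]
    constructor
    · rintro ⟨z, hzL, hznR, hlt⟩
      refine ⟨F z, ⟨z, hzL, rfl⟩, ?_, ?_⟩
      · intro h
        exact hznR ((hRA (Or.inl hzL) (Or.inr hc)).1 h)
      · exact (hltB (Or.inl (hAB.Lsub hzL)) (Or.inl hbL)).2 hlt
    · rintro ⟨z', ⟨z, hzL, rfl⟩, hznR, hlt⟩
      refine ⟨z, hzL, fun h => hznR ((hRA (Or.inl hzL) (Or.inr hc)).2 h), ?_⟩
      exact (hltB (Or.inl (hAB.Lsub hzL)) (Or.inl hbL)).1 hlt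
  · rintro y ⟨c, hcB, rfl⟩ hnA
    have hcA : c ∉ A.C := fun h => hnA ⟨c, h, rfl⟩
    obtain ⟨u, v, huR, hvL, hvnR, hbd⟩ := hAB.newC c hcB hcA
    have huL : u ∈ B.L := (hB.RLC _ _ huR).1
    refine ⟨F u, F v, (hRB (Or.inl huL) (Or.inr hcB)).2 huR, ⟨v, hvL, rfl⟩,
      fun h => hvnR ((hRB (Or.inl hvL) (Or.inr hcB)).1 h), ?_⟩
    rintro x ⟨a, haL, rfl⟩
    rcases hbd a haL with h | h
    · exact Or.inl ((hltB (Or.inl (hAB.Lsub haL)) (Or.inl huL)).2 h)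
    · exact Or.inr ((hltB (Or.inl hvL) (Or.inl (hAB.Lsub haL))).2 h)

end KStr
end GDST

namespace GDST
open Set Function KStr

theorem bddAbove_of_mk_lt_lift (s : Set Ordinal.{0}) (c : Cardinal.{0})
    (h : Cardinal.mk s < Cardinal.lift.{1,0} c) : BddAbove s := by
  rw [Ordinal.bddAbove_iff_small]
  obtain ⟨c', -, hc'⟩ := Cardinal.lt_lift_iff.1 h
  have h2 : Cardinal.lift.{0,1} (Cardinal.mk s) = Cardinal.lift.{1,0} (Cardinal.mk (Quotient.out c')) := by
    rw [Cardinal.lift_id'.{0,1}, Cardinal.mk_out]; exact hc'.symm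
  obtain ⟨e⟩ := Cardinal.lift_mk_eq'.1 h2
  exact small_of_injective e.injective

namespace KStr

theorem mem_unionChain_L {A : Ordinal → KStr Ordinal.{0}} {i x : Ordinal} :
    x ∈ (unionChain A i).L ↔ ∃ j < i, x ∈ (A j).L := by
  simp [unionChain]

theorem mem_unionChain_C {A : Ordinal → KStr Ordinal.{0}} {i x : Ordinal} :
    x ∈ (unionChain A i).C ↔ ∃ j < i, x ∈ (A j).C := by
  simp [unionChain]

theorem mem_unionChain_dom {A : Ordinal → KStr Ordinal.{0}} {i x : Ordinal} :
    x ∈ dom (unionChain A i) ↔ ∃ j < i, x ∈ dom (A j) := by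
  simp only [dom, Set.mem_union, mem_unionChain_L, mem_unionChain_C]
  constructor
  · rintro (⟨j, hj, hx⟩ | ⟨j, hj, hx⟩)
    exacts [⟨j, hj, Or.inl hx⟩, ⟨j, hj, Or.inr hx⟩]
  · rintro ⟨j, hj, hx | hx⟩
    exacts [Or.inl ⟨j, hj, hx⟩, Or.inr ⟨j, hj, hx⟩]

end KStr

section Chain
open KStr

variable {κ : Ordinal.{0}} {f : Ordinal → Ordinal} {A : Ordinal → KStr Ordinal.{0}}

theorem chainSpec.mem (hA : chainSpec κ f A) : ∀ i ≤ κ, memK (A i) := hA.1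
theorem chainSpec.mono (hA : chainSpec κ f A) :
    ∀ i j, i < j → j ≤ κ → strongSub (A i) (A j) := hA.2.1
theorem chainSpec.card (hA : chainSpec κ f A) :
    ∀ i < κ, Cardinal.mk (dom (A i)) < Cardinal.lift.{1,0} κ.card := hA.2.2.1
theorem chainSpec.zero (hA : chainSpec κ f A) :
    (A 0).C = ∅ ∧ isQtimesRevBlock (A 0).lt (A 0).L 1 := hA.2.2.2.1
theorem chainSpec.limit (hA : chainSpec κ f A) :
    ∀ i < κ, Order.IsSuccLimit i →
      (∃ x, x ∉ (unionChain A i).C ∧ (A i).C = (unionChain A i).C ∪ {x} ∧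
        ∀ y, ((A i).R y x ↔ y ∈ (unionChain A i).L)) ∧
      (∀ b ∈ (A i).L \ (unionChain A i).L, ∀ a ∈ (unionChain A i).L, (A i).lt a b) ∧
      isQtimesRevBlock (A i).lt ((A i).L \ (unionChain A i).L) (f i) := hA.2.2.2.2.1
theorem chainSpec.top (hA : chainSpec κ f A) :
    (A κ).L = (unionChain A κ).L ∧ (A κ).C = (unionChain A κ).C := hA.2.2.2.2.2.1
theorem chainSpec.rich (hA : chainSpec κ f A) :
    ∀ i < κ, ∀ Cs : KStr Ordinal, memK Cs → strongSub (A i) Cs →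
      Cardinal.mk (dom Cs) < Cardinal.lift.{1,0} κ.card →
      ∃ j, i ≤ j ∧ j < κ ∧ ∃ F : Ordinal → Ordinal,
        Set.InjOn F (dom Cs) ∧ Set.EqOn F id (dom (A i)) ∧
        strongSub (mapK F Cs) (A j) := hA.2.2.2.2.2.2

theorem chainSpec.le (hA : chainSpec κ f A) {i j : Ordinal} (hij : i ≤ j) (hj : j ≤ κ) :
    strongSub (A i) (A j) := by
  rcases eq_or_lt_of_le hij with rfl | h
  · exact strongSub_refl (hA.mem i hj)
  · exact hA.mono i j h hj

theorem chainSpec.L_mono (hA : chainSpec κ f A) {i j : Ordinal} (hij : i ≤ j) (hj : j ≤ κ) :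
    (A i).L ⊆ (A j).L := (hA.le hij hj).Lsub
theorem chainSpec.C_mono (hA : chainSpec κ f A) {i j : Ordinal} (hij : i ≤ j) (hj : j ≤ κ) :
    (A i).C ⊆ (A j).C := (hA.le hij hj).Csub
theorem chainSpec.dom_mono (hA : chainSpec κ f A) {i j : Ordinal} (hij : i ≤ j) (hj : j ≤ κ) :
    dom (A i) ⊆ dom (A j) := (hA.le hij hj).domSub

theorem chainSpec.lt_iff (hA : chainSpec κ f A) {i j x y : Ordinal} (hij : i ≤ j) (hj : j ≤ κ)
    (hx : x ∈ (A i).L) (hy : y ∈ (A i).L) : (A i).lt x y ↔ (A j).lt x y :=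
  (hA.le hij hj).ltIff x hx y hy

theorem chainSpec.R_iff (hA : chainSpec κ f A) {i j x y : Ordinal} (hij : i ≤ j) (hj : j ≤ κ)
    (hx : x ∈ (A i).L) (hy : y ∈ (A i).C) : (A i).R x y ↔ (A j).R x y :=
  (hA.le hij hj).RIff x hx y hy

/-- The union is contained in the stage. -/
theorem chainSpec.unionL_sub (hA : chainSpec κ f A) {δ : Ordinal} (hδ : δ ≤ κ) :
    (unionChain A δ).L ⊆ (A δ).L := by
  intro x hx
  obtain ⟨r, hr, hx⟩ := mem_unionChain_L.1 hx
  exact hA.L_mono hr.le hδ hx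

theorem chainSpec.unionC_sub (hA : chainSpec κ f A) {δ : Ordinal} (hδ : δ ≤ κ) :
    (unionChain A δ).C ⊆ (A δ).C := by
  intro x hx
  obtain ⟨r, hr, hx⟩ := mem_unionChain_C.1 hx
  exact hA.C_mono hr.le hδ hx

/-- Two elements of the union `L` lie in a common stage. -/
theorem chainSpec.unionL_pair (hA : chainSpec κ f A) {δ x y : Ordinal} (hδ : δ ≤ κ)
    (hx : x ∈ (unionChain A δ).L) (hy : y ∈ (unionChain A δ).L) :
    ∃ r < δ, x ∈ (A r).L ∧ y ∈ (A r).L := by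
  obtain ⟨r1, hr1, hx⟩ := mem_unionChain_L.1 hx
  obtain ⟨r2, hr2, hy⟩ := mem_unionChain_L.1 hy
  refine ⟨max r1 r2, max_lt hr1 hr2, ?_, ?_⟩
  · exact hA.L_mono (le_max_left _ _) ((max_lt hr1 hr2).le.trans hδ) hx
  · exact hA.L_mono (le_max_right _ _) ((max_lt hr1 hr2).le.trans hδ) hy

theorem chainSpec.union_lt_iff (hA : chainSpec κ f A) {δ x y : Ordinal} (hδ : δ ≤ κ)
    (hx : x ∈ (unionChain A δ).L) (hy : y ∈ (unionChain A δ).L) :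
    (unionChain A δ).lt x y ↔ (A δ).lt x y := by
  constructor
  · rintro ⟨r, hr, hlt⟩
    have hm := (hA.mem r (hr.le.trans hδ)).ltL _ _ hlt
    exact (hA.lt_iff hr.le hδ hm.1 hm.2).1 hlt
  · intro hlt
    obtain ⟨r, hr, hx, hy⟩ := hA.unionL_pair hδ hx hy
    exact ⟨r, hr, (hA.lt_iff hr.le hδ hx hy).2 hlt⟩

theorem chainSpec.union_R_iff (hA : chainSpec κ f A) {δ x y : Ordinal} (hδ : δ ≤ κ)
    (hx : x ∈ (unionChain A δ).L) (hy : y ∈ (unionChain A δ).C) :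
    (unionChain A δ).R x y ↔ (A δ).R x y := by
  constructor
  · rintro ⟨r, hr, hR⟩
    have hm := (hA.mem r (hr.le.trans hδ)).RLC _ _ hR
    exact (hA.R_iff hr.le hδ hm.1 hm.2).1 hR
  · intro hR
    obtain ⟨r1, hr1, hx'⟩ := mem_unionChain_L.1 hx
    obtain ⟨r2, hr2, hy'⟩ := mem_unionChain_C.1 hy
    have hm : max r1 r2 < δ := max_lt hr1 hr2
    refine ⟨max r1 r2, hm, ?_⟩
    have hx'' := hA.L_mono (le_max_left _ _) (hm.le.trans hδ) hx'
    have hy'' := hA.C_mono (le_max_right _ _) (hm.le.trans hδ) hy'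
    exact (hA.R_iff hm.le hδ hx'' hy'').2 hR

theorem chainSpec.union_ltL (hA : chainSpec κ f A) {δ : Ordinal} (hδ : δ ≤ κ) :
    ∀ x y, (unionChain A δ).lt x y → x ∈ (unionChain A δ).L ∧ y ∈ (unionChain A δ).L := by
  rintro x y ⟨r, hr, hlt⟩
  have := (hA.mem r (hr.le.trans hδ)).ltL _ _ hlt
  exact ⟨mem_unionChain_L.2 ⟨r, hr, this.1⟩, mem_unionChain_L.2 ⟨r, hr, this.2⟩⟩

theorem chainSpec.union_RLC (hA : chainSpec κ f A) {δ : Ordinal} (hδ : δ ≤ κ) :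
    ∀ x y, (unionChain A δ).R x y → x ∈ (unionChain A δ).L ∧ y ∈ (unionChain A δ).C := by
  rintro x y ⟨r, hr, hR⟩
  have := (hA.mem r (hr.le.trans hδ)).RLC _ _ hR
  exact ⟨mem_unionChain_L.2 ⟨r, hr, this.1⟩, mem_unionChain_C.2 ⟨r, hr, this.2⟩⟩

/-- No block element is `R`-related to an old `C`-point. -/
theorem chainSpec.block_not_R (hA : chainSpec κ f A) {δ : Ordinal} (hδ : δ ≤ κ)
    (htop : ∀ b ∈ (A δ).L \ (unionChain A δ).L, ∀ a ∈ (unionChain A δ).L, (A δ).lt a b)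
    {b c : Ordinal} (hb : b ∈ (A δ).L \ (unionChain A δ).L)
    (hc : c ∈ (unionChain A δ).C) : ¬ (A δ).R b c := by
  intro hR
  obtain ⟨r, hr, hcr⟩ := mem_unionChain_C.1 hc
  obtain ⟨hbL, z, hzR, hlt⟩ := ((hA.le hr.le hδ).Rchar c hcr b).1 hR
  have hzU : z ∈ (unionChain A δ).L :=
    mem_unionChain_L.2 ⟨r, hr, ((hA.mem r (hr.le.trans hδ)).RLC _ _ hzR).1⟩
  exact (hA.mem δ hδ).asymm hlt (htop b hb z hzU)

end Chain
end GDST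

namespace GDST
open Set Function KStr

/-- Two blocks over the same `δ` are order isomorphic. -/
theorem blockIso {ltf ltg : Ordinal.{0} → Ordinal.{0} → Prop} {Bf Bg : Set Ordinal.{0}}
    {δ : Ordinal.{0}} (hf : isQtimesRevBlock ltf Bf δ) (hg : isQtimesRevBlock ltg Bg δ) :
    ∃ m : Ordinal → Ordinal, Set.BijOn m Bf Bg ∧
      ∀ x ∈ Bf, ∀ y ∈ Bf, (ltf x y ↔ ltg (m x) (m y)) := by
  obtain ⟨ef, ⟨efmaps, efinj, efsurj⟩, hef⟩ := hf
  obtain ⟨eg, ⟨egmaps, eginj, egsurj⟩, heg⟩ := hg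
  refine ⟨fun x => invFunOn eg Bg (ef x), ⟨?_, ?_, ?_⟩, ?_⟩
  · intro x hx
    exact invFunOn_mem (egsurj (efmaps hx))
  · intro x hx y hy h
    have h1 : eg (invFunOn eg Bg (ef x)) = ef x := invFunOn_eq (egsurj (efmaps hx))
    have h2 : eg (invFunOn eg Bg (ef y)) = ef y := invFunOn_eq (egsurj (efmaps hy))
    apply efinj hx hy
    rw [← h1, ← h2]
    exact congrArg eg h
  · intro y hy
    obtain ⟨x, hx, hex⟩ := efsurj (egmaps hy)
    refine ⟨x, hx, ?_⟩
    have h1 : eg (invFunOn eg Bg (ef x)) = ef x := invFunOn_eq (egsurj (efmaps hx))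
    show invFunOn eg Bg (ef x) = y
    apply eginj (invFunOn_mem (egsurj (efmaps hx))) hy
    rw [h1, hex]
  · intro x hx y hy
    have h1 : eg (invFunOn eg Bg (ef x)) = ef x := invFunOn_eq (egsurj (efmaps hx))
    have h2 : eg (invFunOn eg Bg (ef y)) = ef y := invFunOn_eq (egsurj (efmaps hy))
    rw [hef x hx y hy, heg _ (invFunOn_mem (egsurj (efmaps hx))) _
      (invFunOn_mem (egsurj (efmaps hy))), h1, h2]

section Chain
open KStr

variable {κ : Ordinal.{0}} {f : Ordinal → Ordinal} {A : Ordinal → KStr Ordinal.{0}}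

/-- The pull-back / richness step: a structure `B` into which `A i` is strongly
embedded via `h` can be pulled back and re-embedded into some later stage of the
chain, inverting `h`. -/
theorem chainSpec.pullback (hA : chainSpec κ f A) {i : Ordinal} (hi : i < κ)
    {B : KStr Ordinal.{0}} (hB : memK B) (hBc : Cardinal.mk (dom B) < Cardinal.lift.{1,0} κ.card)
    {h : Ordinal → Ordinal} (hinj : InjOn h (dom (A i)))
    (hsub : strongSub (mapK h (A i)) B) :
    ∃ k, i ≤ k ∧ k < κ ∧ ∃ q : Ordinal → Ordinal, InjOn q (dom B) ∧
      (∀ a ∈ dom (A i), q (h a) = a) ∧ strongSub (mapK q B) (A k) := by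
  classical
  have hAi : memK (A i) := hA.mem i hi.le
  obtain ⟨β, hβ⟩ := bddAbove_of_mk_lt_lift (dom (A i)) κ.card (hA.card i hi)
  -- the inverse-extension `e`
  set e : Ordinal → Ordinal := fun x =>
    if x ∈ h '' dom (A i) then invFunOn h (dom (A i)) x else (β + 1) + x with he
  have hdomsub : h '' dom (A i) ⊆ dom B := by
    rw [← dom_mapK]; exact hsub.domSub
  have heh : ∀ a ∈ dom (A i), e (h a) = a := by
    intro a ha
    have : h a ∈ h '' dom (A i) := ⟨a, ha, rfl⟩
    rw [he]; simp only [this, if_pos]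
    exact hinj.leftInvOn_invFunOn ha
  have hemem : ∀ x ∈ h '' dom (A i), e x ∈ dom (A i) ∧ h (e x) = x := by
    intro x hx
    have hx' : ∃ a ∈ dom (A i), h a = x := by simpa using hx
    rw [he]; simp only [hx, if_pos]
    exact ⟨invFunOn_mem hx', invFunOn_eq hx'⟩
  have hout : ∀ x, x ∉ h '' dom (A i) → e x = (β + 1) + x := by
    intro x hx; rw [he]; simp only [hx, if_neg, not_false_iff]
  have houtbig : ∀ x, (β + 1) + x ∉ dom (A i) := by
    intro x hmem
    have h1 : (β + 1) + x ≤ β := hβ hmem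
    have h2 : β < (β + 1) + x := lt_of_lt_of_le
      (by rw [Ordinal.add_one_eq_succ]; exact Order.lt_succ β) (le_self_add)
    exact absurd h1 (not_le.2 h2)
  have heinj : InjOn e (dom B) := by
    intro x hx y hy hxy
    by_cases hxi : x ∈ h '' dom (A i) <;> by_cases hyi : y ∈ h '' dom (A i)
    · obtain ⟨hex, hhex⟩ := hemem x hxi
      obtain ⟨hey, hhey⟩ := hemem y hyi
      rw [← hhex, ← hhey, hxy]
    · exfalso
      obtain ⟨hex, -⟩ := hemem x hxi
      rw [hout y hyi] at hxy
      exact houtbig y (hxy ▸ hex)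
    · exfalso
      obtain ⟨hey, -⟩ := hemem y hyi
      rw [hout x hxi] at hxy
      exact houtbig x (hxy.symm ▸ hey)
    · rw [hout x hxi, hout y hyi] at hxy
      exact (add_right_inj _).1 hxy
  -- the pulled-back structure
  have hCs : memK (mapK e B) := mapK_memK hB heinj
  have heqid : EqOn (fun x => e (h x)) id (dom (A i)) := fun a ha => heh a ha
  have hAeq : mapK e (mapK h (A i)) = A i := by
    rw [mapK_comp]; exact mapK_eqOn_id hAi heqid
  have hAsub : strongSub (A i) (mapK e B) := by
    have := strongSub_map (mapK_memK hAi hinj) hB hsub heinj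
    rwa [hAeq] at this
  have hCsc : Cardinal.mk (dom (mapK e B)) < Cardinal.lift.{1,0} κ.card := by
    rw [dom_mapK]
    exact lt_of_le_of_lt (Cardinal.mk_image_le) hBc
  obtain ⟨k, hik, hk, F, hFinj, hFid, hFsub⟩ := hA.rich i hi (mapK e B) hCs hAsub hCsc
  refine ⟨k, hik, hk, fun x => F (e x), ?_, ?_, ?_⟩
  · intro x hx y hy hxy
    apply heinj hx hy
    apply hFinj _ _ hxy
    · rw [dom_mapK]; exact ⟨x, hx, rfl⟩
    · rw [dom_mapK]; exact ⟨y, hy, rfl⟩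
  · intro a ha
    show F (e (h a)) = a
    rw [heh a ha]
    exact hFid ha
  · rw [← mapK_comp]; exact hFsub

end Chain
end GDST

namespace GDST
open Set Function KStr

/-! ### The back-and-forth system -/

section Main

variable {κ : Ordinal.{0}} {f g : Ordinal.{0} → Ordinal.{0}}
  {Af Ag : Ordinal.{0} → KStr Ordinal.{0}} {Cl : Set Ordinal.{0}}

/-- The invariant of the back-and-forth recursion at stage `ν`, relative to the
states at earlier stages. A state is a triple `(i, j, h)` where `h` strongly
embeds `Af i` into `Ag j`. -/
def Phi (κ : Ordinal.{0}) (Af Ag : Ordinal.{0} → KStr Ordinal.{0}) (Cl : Set Ordinal.{0})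
    (ν : Ordinal.{0}) (rec : ∀ μ, μ < ν → Ordinal.{0} × Ordinal.{0} × (Ordinal.{0} → Ordinal.{0}))
    (s : Ordinal.{0} × Ordinal.{0} × (Ordinal.{0} → Ordinal.{0})) : Prop :=
  s.1 < κ ∧ s.2.1 < κ ∧ ν ≤ s.1 ∧ s.1 ≤ s.2.1 ∧ s.2.1 ∈ Cl ∧
  InjOn s.2.2 (dom (Af s.1)) ∧
  strongSub (mapK s.2.2 (Af s.1)) (Ag s.2.1) ∧
  ∀ μ (hμ : μ < ν),
    (rec μ hμ).1 < s.1 ∧ (rec μ hμ).2.1 < s.1 ∧ (rec μ hμ).2.1 < s.2.1 ∧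
    EqOn (rec μ hμ).2.2 s.2.2 (dom (Af (rec μ hμ).1)) ∧
    dom (Ag (rec μ hμ).2.1) ⊆ s.2.2 '' (dom (Af s.1))

open Classical in
/-- The sequence of states of the back-and-forth recursion. -/
noncomputable def bfs (κ : Ordinal.{0}) (Af Ag : Ordinal.{0} → KStr Ordinal.{0})
    (Cl : Set Ordinal.{0}) : Ordinal.{0} → Ordinal.{0} × Ordinal.{0} × (Ordinal.{0} → Ordinal.{0}) :=
  WellFounded.fix Ordinal.lt_wf (fun ν rec =>
    if h : ∃ s, Phi κ Af Ag Cl ν rec s then Classical.choose h else (0, 0, fun x => x))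

open Classical in
theorem bfs_eq (κ : Ordinal.{0}) (Af Ag : Ordinal.{0} → KStr Ordinal.{0}) (Cl : Set Ordinal.{0})
    (ν : Ordinal.{0}) :
    bfs κ Af Ag Cl ν =
      if h : ∃ s, Phi κ Af Ag Cl ν (fun μ _ => bfs κ Af Ag Cl μ) s then Classical.choose h
      else (0, 0, fun x => x) :=
  WellFounded.fix_eq _ _ _

theorem bfs_phi {ν : Ordinal.{0}}
    (h : ∃ s, Phi κ Af Ag Cl ν (fun μ _ => bfs κ Af Ag Cl μ) s) :
    Phi κ Af Ag Cl ν (fun μ _ => bfs κ Af Ag Cl μ) (bfs κ Af Ag Cl ν) := by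
  classical
  rw [bfs_eq κ Af Ag Cl ν]
  rw [dif_pos h]
  exact Classical.choose_spec h

/-! ### Transfer along a strong embedding -/

theorem emb_L_mem {X Y : KStr Ordinal.{0}} {h : Ordinal.{0} → Ordinal.{0}}
    (hsub : strongSub (mapK h X) Y) {a : Ordinal.{0}} (ha : a ∈ X.L) : h a ∈ Y.L :=
  hsub.Lsub ⟨a, ha, rfl⟩

theorem emb_C_mem {X Y : KStr Ordinal.{0}} {h : Ordinal.{0} → Ordinal.{0}}
    (hsub : strongSub (mapK h X) Y) {a : Ordinal.{0}} (ha : a ∈ X.C) : h a ∈ Y.C :=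
  hsub.Csub ⟨a, ha, rfl⟩

theorem emb_lt_iff {X Y : KStr Ordinal.{0}} {h : Ordinal.{0} → Ordinal.{0}}
    (hX : memK X) (hinj : InjOn h (dom X)) (hsub : strongSub (mapK h X) Y)
    {a b : Ordinal.{0}} (ha : a ∈ X.L) (hb : b ∈ X.L) :
    X.lt a b ↔ Y.lt (h a) (h b) :=
  (mapK_lt_iff hX.ltL hinj (Or.inl ha) (Or.inl hb)).symm.trans
    (hsub.ltIff _ ⟨a, ha, rfl⟩ _ ⟨b, hb, rfl⟩)

theorem emb_R_iff {X Y : KStr Ordinal.{0}} {h : Ordinal.{0} → Ordinal.{0}}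
    (hX : memK X) (hinj : InjOn h (dom X)) (hsub : strongSub (mapK h X) Y)
    {a c : Ordinal.{0}} (ha : a ∈ X.L) (hc : c ∈ X.C) :
    X.R a c ↔ Y.R (h a) (h c) :=
  (mapK_R_iff hX.RLC hinj (Or.inl ha) (Or.inr hc)).symm.trans
    (hsub.RIff _ ⟨a, ha, rfl⟩ _ ⟨c, hc, rfl⟩)

/-- An order isomorphism of the full structures gives `mapK h X = Y`. -/
theorem mapK_eq_of_iso {X Y : KStr Ordinal.{0}} (hX : memK X) (hY : memK Y)
    {h : Ordinal.{0} → Ordinal.{0}}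
    (hLbij : BijOn h X.L Y.L) (hCbij : BijOn h X.C Y.C)
    (hlt : ∀ a ∈ X.L, ∀ b ∈ X.L, X.lt a b → Y.lt (h a) (h b))
    (hR : ∀ a ∈ X.L, ∀ c ∈ X.C, (X.R a c ↔ Y.R (h a) (h c))) :
    mapK h X = Y := by
  have hltr : ∀ a ∈ X.L, ∀ b ∈ X.L, Y.lt (h a) (h b) → X.lt a b := by
    intro a ha b hb hyl
    rcases eq_or_ne a b with rfl | hne
    · exact absurd hyl (hY.irrefl _ (hLbij.mapsTo ha))
    rcases hX.total a ha b hb hne with h1 | h1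
    · exact h1
    · exact absurd (hlt b hb a ha h1) (fun h2 => hY.asymm hyl h2)
  refine ext' ?_ ?_ ?_ ?_
  · exact hLbij.image_eq
  · exact hCbij.image_eq
  · funext x y
    apply propext
    constructor
    · rintro ⟨a, ha, b, hb, rfl, rfl, hab⟩
      exact hlt a ha b hb hab
    · intro hxy
      obtain ⟨hx, hy⟩ := hY.ltL _ _ hxy
      obtain ⟨a, ha, rfl⟩ := hLbij.surjOn hx
      obtain ⟨b, hb, rfl⟩ := hLbij.surjOn hy
      exact ⟨a, ha, b, hb, rfl, rfl, hltr a ha b hb hxy⟩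
  · funext x y
    apply propext
    constructor
    · rintro ⟨a, ha, c, hc, rfl, rfl, hac⟩
      exact (hR a ha c hc).1 hac
    · intro hxy
      obtain ⟨hx, hy⟩ := hY.RLC _ _ hxy
      obtain ⟨a, ha, rfl⟩ := hLbij.surjOn hx
      obtain ⟨c, hc, rfl⟩ := hCbij.surjOn hy
      exact ⟨a, ha, c, hc, rfl, rfl, (hR a ha c hc).2 hxy⟩

/-! ### The initial state -/

theorem exists_zero (hAf : chainSpec κ f Af) (hAg : chainSpec κ g Ag)
    (hCl : clubIn Cl κ) (hκpos : 0 < κ)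
    (rec : ∀ μ, μ < (0:Ordinal.{0}) → Ordinal.{0} × Ordinal.{0} × (Ordinal.{0} → Ordinal.{0})) :
    ∃ s, Phi κ Af Ag Cl 0 rec s := by
  obtain ⟨hfC0, hfB0⟩ := hAf.zero
  obtain ⟨hgC0, hgB0⟩ := hAg.zero
  obtain ⟨m, mbij, mord⟩ := blockIso hfB0 hgB0
  obtain ⟨j0, hj0Cl, -, hj0κ⟩ := hCl.1 0 hκpos
  have hf0 : memK (Af 0) := hAf.mem 0 hκpos.le
  have hg0 : memK (Ag 0) := hAg.mem 0 hκpos.le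
  have hdom0 : dom (Af 0) = (Af 0).L := by
    rw [dom, hfC0, Set.union_empty]
  have hinj : InjOn m (dom (Af 0)) := by rw [hdom0]; exact mbij.injOn
  have hmeq : mapK m (Af 0) = Ag 0 := by
    refine mapK_eq_of_iso hf0 hg0 mbij ?_ ?_ ?_
    · rw [hfC0, hgC0]
      exact ⟨fun x hx => hx.elim, fun x hx => hx.elim, fun x hx => hx.elim⟩
    · intro a ha b hb hab
      exact (mord a ha b hb).1 hab
    · intro a ha c hc
      rw [hfC0] at hc; exact hc.elim
  refine ⟨(0, j0, m), hκpos, hj0κ, le_rfl, zero_le, hj0Cl, hinj, ?_, ?_⟩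
  · rw [hmeq]
    exact hAg.le (zero_le) hj0κ.le
  · intro μ hμ
    exact absurd hμ (not_lt_of_ge (zero_le : (0:Ordinal.{0}) ≤ μ))

end Main
end GDST

namespace GDST
open Set Function KStr

section Main

variable {κ : Ordinal.{0}} {f g : Ordinal.{0} → Ordinal.{0}}
  {Af Ag : Ordinal.{0} → KStr Ordinal.{0}} {Cl : Set Ordinal.{0}}

theorem add_one_lt_limit {o a : Ordinal.{0}} (h : Order.IsSuccLimit o) (ha : a < o) :
    a + 1 < o := by
  rw [Ordinal.add_one_eq_succ]; exact h.succ_lt ha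

theorem lt_add_one_of_le {a b : Ordinal.{0}} (h : a ≤ b) : a < b + 1 := by
  rw [Ordinal.add_one_eq_succ]; exact Order.lt_succ_iff.2 h

theorem exists_succ (hAf : chainSpec κ f Af) (hAg : chainSpec κ g Ag)
    (hCl : clubIn Cl κ) (hlimκ : Order.IsSuccLimit κ) {ρ : Ordinal.{0}} (hρ : ρ < κ)
    (hprev : Phi κ Af Ag Cl ρ (fun μ _ => bfs κ Af Ag Cl μ) (bfs κ Af Ag Cl ρ)) :
    ∃ s, Phi κ Af Ag Cl (ρ + 1) (fun μ _ => bfs κ Af Ag Cl μ) s := by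
  obtain ⟨hiκ, hjκ, hρi, hij, hjCl, hinj, hsub, hrec⟩ := hprev
  set st := bfs κ Af Ag Cl ρ with hst
  set i := st.1
  set j := st.2.1
  set h := st.2.2
  -- first pullback: invert `h`, landing in the `Af` chain
  obtain ⟨k, hik, hkκ, q, hqinj, hqh, hqsub⟩ :=
    hAf.pullback hiκ (hAg.mem j hjκ.le) (hAg.card j hjκ) hinj hsub
  -- push up to a large stage `m`
  set m := max k (max j (ρ + 1)) + 1 with hm
  have hmκ : m < κ :=
    add_one_lt_limit hlimκ (max_lt hkκ (max_lt hjκ (add_one_lt_limit hlimκ hρ)))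
  have hkm : k < m := lt_add_one_of_le (le_max_left _ _)
  have hjm : j < m := lt_add_one_of_le ((le_max_left _ _).trans (le_max_right _ _))
  have hρm : ρ + 1 < m := lt_add_one_of_le ((le_max_right _ _).trans (le_max_right _ _))
  have hqsubm : strongSub (mapK q (Ag j)) (Af m) :=
    strongSub_trans (mapK_memK (hAg.mem j hjκ.le) hqinj) (hAf.mem k hkκ.le)
      (hAf.mem m hmκ.le) hqsub (hAf.le hkm.le hmκ.le)
  -- second pullback: invert `q`, landing in the `Ag` chain
  obtain ⟨l, hjl, hlκ, h', hh'inj, hh'q, hh'sub⟩ :=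
    hAg.pullback hjκ (hAf.mem m hmκ.le) (hAf.card m hmκ) hqinj hqsubm
  -- bump the target into the club
  obtain ⟨j', hj'Cl, hj'ge, hj'κ⟩ := hCl.1 (max l m + 1)
    (add_one_lt_limit hlimκ (max_lt hlκ hmκ))
  have hlj' : l < j' := lt_of_lt_of_le (lt_add_one_of_le (le_max_left _ _)) hj'ge
  have hmj' : m < j' := lt_of_lt_of_le (lt_add_one_of_le (le_max_right _ _)) hj'ge
  have hh'sub' : strongSub (mapK h' (Af m)) (Ag j') :=
    strongSub_trans (mapK_memK (hAf.mem m hmκ.le) hh'inj) (hAg.mem l hlκ.le)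
      (hAg.mem j' hj'κ.le) hh'sub (hAg.le hlj'.le hj'κ.le)
  -- facts about the extension
  have hhmem : ∀ a ∈ dom (Af i), h a ∈ dom (Ag j) := by
    intro a ha
    have : h a ∈ dom (mapK h (Af i)) := by rw [dom_mapK]; exact ⟨a, ha, rfl⟩
    exact hsub.domSub this
  have hext : ∀ a ∈ dom (Af i), h a = h' a := by
    intro a ha
    have h1 : h' (q (h a)) = h a := hh'q (h a) (hhmem a ha)
    rw [hqh a ha] at h1
    exact h1.symm
  have hcov : ∀ b ∈ dom (Ag j), b ∈ h' '' dom (Af m) := by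
    intro b hb
    have hqb : q b ∈ dom (Af m) := by
      have : q b ∈ dom (mapK q (Ag j)) := by rw [dom_mapK]; exact ⟨b, hb, rfl⟩
      exact hqsubm.domSub this
    exact ⟨q b, hqb, hh'q b hb⟩
  refine ⟨(m, j', h'), hmκ, hj'κ, le_of_lt hρm, hmj'.le, hj'Cl, hh'inj, hh'sub', ?_⟩
  intro μ hμ
  rcases (Order.lt_succ_iff.1 hμ).lt_or_eq with hlt | heq
  · obtain ⟨h1, h2, h3, h4, h5⟩ := hrec μ hlt
    have hidom : dom (Af (bfs κ Af Ag Cl μ).1) ⊆ dom (Af i) :=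
      hAf.dom_mono h1.le hiκ.le
    have him : i < m := lt_of_le_of_lt hik hkm
    refine ⟨h1.trans him, h2.trans him, h3.trans (hjm.trans hmj'), ?_, ?_⟩
    · intro a ha
      rw [h4 ha, hext a (hidom ha)]
    · intro b hb
      obtain ⟨a, ha, rfl⟩ := h5 hb
      exact ⟨a, hAf.dom_mono him.le hmκ.le ha, (hext a ha).symm⟩
  · subst heq
    have him : i < m := lt_of_le_of_lt hik hkm
    refine ⟨him, hjm, hjm.trans hmj', ?_, ?_⟩
    · intro a ha
      exact hext a ha
    · exact hcov

end Main
end GDST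

namespace GDST
open Set Function KStr

section Main

variable {κ : Ordinal.{0}} {f g : Ordinal.{0} → Ordinal.{0}}
  {Af Ag : Ordinal.{0} → KStr Ordinal.{0}} {Cl : Set Ordinal.{0}}

open Classical in
/-- The union of the back-and-forth maps below `ν`. -/
noncomputable def Hu (κ : Ordinal.{0}) (Af Ag : Ordinal.{0} → KStr Ordinal.{0})
    (Cl : Set Ordinal.{0}) (ν : Ordinal.{0}) : Ordinal.{0} → Ordinal.{0} := fun x =>
  if hx : ∃ μ, ∃ _ : μ < ν, x ∈ dom (Af ((bfs κ Af Ag Cl μ).1))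
  then (bfs κ Af Ag Cl hx.choose).2.2 x else 0

theorem unionMap (hAf : chainSpec κ f Af) (hAg : chainSpec κ g Ag)
    {ν δ : Ordinal.{0}} (hν : ν ≤ κ) (hδ : δ ≤ κ)
    (hIH : ∀ μ (hμ : μ < ν), Phi κ Af Ag Cl μ (fun μ' _ => bfs κ Af Ag Cl μ') (bfs κ Af Ag Cl μ))
    (hsucc : ∀ μ, μ < ν → μ + 1 < ν)
    (hiδ : ∀ μ (_ : μ < ν), (bfs κ Af Ag Cl μ).1 < δ)
    (hjδ : ∀ μ (_ : μ < ν), (bfs κ Af Ag Cl μ).2.1 < δ)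
    (hcof : ∀ r, r < δ → ∃ μ, ∃ _ : μ < ν, r < (bfs κ Af Ag Cl μ).1) :
    InjOn (Hu κ Af Ag Cl ν) (dom (unionChain Af δ)) ∧
    mapK (Hu κ Af Ag Cl ν) (unionChain Af δ) = unionChain Ag δ ∧
    ∀ μ (hμ : μ < ν),
      EqOn (bfs κ Af Ag Cl μ).2.2 (Hu κ Af Ag Cl ν) (dom (Af (bfs κ Af Ag Cl μ).1)) := by
  classical
  -- abbreviations for the state components and basic consequences of the invariant
  have hiκ : ∀ μ (hμ : μ < ν), (bfs κ Af Ag Cl μ).1 < κ := fun μ hμ => (hIH μ hμ).1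
  have hjκ : ∀ μ (hμ : μ < ν), (bfs κ Af Ag Cl μ).2.1 < κ := fun μ hμ => (hIH μ hμ).2.1
  have hij : ∀ μ (hμ : μ < ν), (bfs κ Af Ag Cl μ).1 ≤ (bfs κ Af Ag Cl μ).2.1 :=
    fun μ hμ => (hIH μ hμ).2.2.2.1
  have hInj : ∀ μ (hμ : μ < ν), InjOn (bfs κ Af Ag Cl μ).2.2 (dom (Af (bfs κ Af Ag Cl μ).1)) :=
    fun μ hμ => (hIH μ hμ).2.2.2.2.2.1
  have hSub : ∀ μ (hμ : μ < ν),
      strongSub (mapK (bfs κ Af Ag Cl μ).2.2 (Af (bfs κ Af Ag Cl μ).1))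
        (Ag (bfs κ Af Ag Cl μ).2.1) :=
    fun μ hμ => (hIH μ hμ).2.2.2.2.2.2.1
  have hLast := fun μ (hμ : μ < ν) => (hIH μ hμ).2.2.2.2.2.2.2
  have hMono : ∀ μ1 μ2 (h1 : μ1 < ν) (h2 : μ2 < ν), μ1 ≤ μ2 →
      (bfs κ Af Ag Cl μ1).1 ≤ (bfs κ Af Ag Cl μ2).1 := by
    intro μ1 μ2 h1 h2 h12
    rcases h12.lt_or_eq with h | h
    · exact (hLast μ2 h2 μ1 h).1.le
    · rw [h]
  have hcoh : ∀ μ1 μ2 (h1 : μ1 < ν) (h2 : μ2 < ν), ∀ x,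
      x ∈ dom (Af (bfs κ Af Ag Cl μ1).1) → x ∈ dom (Af (bfs κ Af Ag Cl μ2).1) →
      (bfs κ Af Ag Cl μ1).2.2 x = (bfs κ Af Ag Cl μ2).2.2 x := by
    intro μ1 μ2 h1 h2 x hx1 hx2
    rcases le_total μ1 μ2 with h12 | h21
    · rcases h12.lt_or_eq with h | h
      · exact (hLast μ2 h2 μ1 h).2.2.2.1 hx1
      · rw [h]
    · rcases h21.lt_or_eq with h | h
      · exact ((hLast μ1 h1 μ2 h).2.2.2.1 hx2).symm
      · rw [h]
  have hWd : ∀ μ (hμ : μ < ν), ∀ x, x ∈ dom (Af (bfs κ Af Ag Cl μ).1) →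
      Hu κ Af Ag Cl ν x = (bfs κ Af Ag Cl μ).2.2 x := by
    intro μ hμ x hxm
    have hx : ∃ μ', ∃ _ : μ' < ν, x ∈ dom (Af ((bfs κ Af Ag Cl μ').1)) := ⟨μ, hμ, hxm⟩
    simp only [Hu, dif_pos hx]
    obtain ⟨hcν, hcx⟩ := hx.choose_spec
    exact hcoh _ μ hcν hμ x hcx hxm
  -- membership characterizations
  have memdom : ∀ x, x ∈ dom (unionChain Af δ) ↔
      ∃ μ, ∃ _ : μ < ν, x ∈ dom (Af (bfs κ Af Ag Cl μ).1) := by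
    intro x
    rw [mem_unionChain_dom]
    constructor
    · rintro ⟨r, hr, hx⟩
      obtain ⟨μ, hμ, hrμ⟩ := hcof r hr
      exact ⟨μ, hμ, hAf.dom_mono hrμ.le (hiκ μ hμ).le hx⟩
    · rintro ⟨μ, hμ, hx⟩
      exact ⟨(bfs κ Af Ag Cl μ).1, hiδ μ hμ, hx⟩
  have memL : ∀ x, x ∈ (unionChain Af δ).L →
      ∃ μ, ∃ _ : μ < ν, x ∈ (Af (bfs κ Af Ag Cl μ).1).L := by
    intro x hx
    obtain ⟨r, hr, hx⟩ := mem_unionChain_L.1 hx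
    obtain ⟨μ, hμ, hrμ⟩ := hcof r hr
    exact ⟨μ, hμ, hAf.L_mono hrμ.le (hiκ μ hμ).le hx⟩
  have memC : ∀ x, x ∈ (unionChain Af δ).C →
      ∃ μ, ∃ _ : μ < ν, x ∈ (Af (bfs κ Af Ag Cl μ).1).C := by
    intro x hx
    obtain ⟨r, hr, hx⟩ := mem_unionChain_C.1 hx
    obtain ⟨μ, hμ, hrμ⟩ := hcof r hr
    exact ⟨μ, hμ, hAf.C_mono hrμ.le (hiκ μ hμ).le hx⟩
  -- injectivity
  have hInjU : InjOn (Hu κ Af Ag Cl ν) (dom (unionChain Af δ)) := by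
    intro x hx y hy hxy
    obtain ⟨μx, hμx, hxd⟩ := (memdom x).1 hx
    obtain ⟨μy, hμy, hyd⟩ := (memdom y).1 hy
    have hμm : max μx μy < ν := max_lt hμx hμy
    have hxd' : x ∈ dom (Af (bfs κ Af Ag Cl (max μx μy)).1) :=
      hAf.dom_mono (hMono μx _ hμx hμm (le_max_left _ _)) (hiκ _ hμm).le hxd
    have hyd' : y ∈ dom (Af (bfs κ Af Ag Cl (max μx μy)).1) :=
      hAf.dom_mono (hMono μy _ hμy hμm (le_max_right _ _)) (hiκ _ hμm).le hyd
    rw [hWd _ hμm x hxd', hWd _ hμm y hyd'] at hxy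
    exact hInj _ hμm hxd' hyd' hxy
  -- L-image facts
  have hLmem : ∀ x ∈ (unionChain Af δ).L, Hu κ Af Ag Cl ν x ∈ (unionChain Ag δ).L := by
    intro x hx
    obtain ⟨μ, hμ, hxL⟩ := memL x hx
    rw [hWd μ hμ x (Or.inl hxL)]
    exact mem_unionChain_L.2 ⟨_, hjδ μ hμ, emb_L_mem (hSub μ hμ) hxL⟩
  have hCmem : ∀ x ∈ (unionChain Af δ).C, Hu κ Af Ag Cl ν x ∈ (unionChain Ag δ).C := by
    intro x hx
    obtain ⟨μ, hμ, hxC⟩ := memC x hx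
    rw [hWd μ hμ x (Or.inr hxC)]
    exact mem_unionChain_C.2 ⟨_, hjδ μ hμ, emb_C_mem (hSub μ hμ) hxC⟩
  -- surjectivity
  have hLsurj : ∀ y ∈ (unionChain Ag δ).L,
      ∃ a ∈ (unionChain Af δ).L, Hu κ Af Ag Cl ν a = y := by
    intro y hy
    obtain ⟨r, hr, hyr⟩ := mem_unionChain_L.1 hy
    obtain ⟨μ0, hμ0, hrμ0⟩ := hcof r hr
    have hrj : r ≤ (bfs κ Af Ag Cl μ0).2.1 := hrμ0.le.trans (hij μ0 hμ0)
    have hyj : y ∈ (Ag (bfs κ Af Ag Cl μ0).2.1).L := hAg.L_mono hrj (hjκ μ0 hμ0).le hyr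
    have hμ1 : μ0 + 1 < ν := hsucc μ0 hμ0
    have hcov := (hLast (μ0+1) hμ1 μ0 (lt_add_one_of_le le_rfl)).2.2.2.2
    obtain ⟨a, ha, hay⟩ := hcov (Or.inl hyj)
    have haL : a ∈ (Af (bfs κ Af Ag Cl (μ0+1)).1).L := by
      rcases ha with h | h
      · exact h
      · exfalso
        have hyC : y ∈ (Ag (bfs κ Af Ag Cl (μ0+1)).2.1).C := by
          rw [← hay]; exact emb_C_mem (hSub _ hμ1) h
        have hj01 : (bfs κ Af Ag Cl μ0).2.1 ≤ (bfs κ Af Ag Cl (μ0+1)).2.1 :=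
          ((hLast (μ0+1) hμ1 μ0 (lt_add_one_of_le le_rfl)).2.2.1).le
        have hyL : y ∈ (Ag (bfs κ Af Ag Cl (μ0+1)).2.1).L :=
          hAg.L_mono hj01 (hjκ _ hμ1).le hyj
        exact (hAg.mem _ (hjκ _ hμ1).le).notL hyC hyL
    refine ⟨a, mem_unionChain_L.2 ⟨_, hiδ _ hμ1, haL⟩, ?_⟩
    rw [hWd _ hμ1 a ha]; exact hay
  have hCsurj : ∀ y ∈ (unionChain Ag δ).C,
      ∃ a ∈ (unionChain Af δ).C, Hu κ Af Ag Cl ν a = y := by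
    intro y hy
    obtain ⟨r, hr, hyr⟩ := mem_unionChain_C.1 hy
    obtain ⟨μ0, hμ0, hrμ0⟩ := hcof r hr
    have hrj : r ≤ (bfs κ Af Ag Cl μ0).2.1 := hrμ0.le.trans (hij μ0 hμ0)
    have hyj : y ∈ (Ag (bfs κ Af Ag Cl μ0).2.1).C := hAg.C_mono hrj (hjκ μ0 hμ0).le hyr
    have hμ1 : μ0 + 1 < ν := hsucc μ0 hμ0
    have hcov := (hLast (μ0+1) hμ1 μ0 (lt_add_one_of_le le_rfl)).2.2.2.2
    obtain ⟨a, ha, hay⟩ := hcov (Or.inr hyj)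
    have haC : a ∈ (Af (bfs κ Af Ag Cl (μ0+1)).1).C := by
      rcases ha with h | h
      · exfalso
        have hyL : y ∈ (Ag (bfs κ Af Ag Cl (μ0+1)).2.1).L := by
          rw [← hay]; exact emb_L_mem (hSub _ hμ1) h
        have hj01 : (bfs κ Af Ag Cl μ0).2.1 ≤ (bfs κ Af Ag Cl (μ0+1)).2.1 :=
          ((hLast (μ0+1) hμ1 μ0 (lt_add_one_of_le le_rfl)).2.2.1).le
        have hyC : y ∈ (Ag (bfs κ Af Ag Cl (μ0+1)).2.1).C :=
          hAg.C_mono hj01 (hjκ _ hμ1).le hyj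
        exact (hAg.mem _ (hjκ _ hμ1).le).notL hyC hyL
      · exact h
    refine ⟨a, mem_unionChain_C.2 ⟨_, hiδ _ hμ1, haC⟩, ?_⟩
    rw [hWd _ hμ1 a ha]; exact hay
  -- the forward order and R transfers
  have hltF : ∀ a ∈ (unionChain Af δ).L, ∀ b ∈ (unionChain Af δ).L,
      (unionChain Af δ).lt a b →
      (unionChain Ag δ).lt (Hu κ Af Ag Cl ν a) (Hu κ Af Ag Cl ν b) := by
    rintro a haU b hbU ⟨r, hr, hlt⟩
    obtain ⟨hma, hmb⟩ := (hAf.mem r (hr.le.trans hδ)).ltL _ _ hlt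
    obtain ⟨μ0, hμ0, hrμ0⟩ := hcof r hr
    have hma' : a ∈ (Af (bfs κ Af Ag Cl μ0).1).L := hAf.L_mono hrμ0.le (hiκ μ0 hμ0).le hma
    have hmb' : b ∈ (Af (bfs κ Af Ag Cl μ0).1).L := hAf.L_mono hrμ0.le (hiκ μ0 hμ0).le hmb
    have hlt' := (hAf.lt_iff hrμ0.le (hiκ μ0 hμ0).le hma hmb).1 hlt
    have := (emb_lt_iff (hAf.mem _ (hiκ μ0 hμ0).le) (hInj μ0 hμ0) (hSub μ0 hμ0)
      hma' hmb').1 hlt'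
    refine ⟨_, hjδ μ0 hμ0, ?_⟩
    rw [hWd μ0 hμ0 a (Or.inl hma'), hWd μ0 hμ0 b (Or.inl hmb')]
    exact this
  have hRF : ∀ a ∈ (unionChain Af δ).L, ∀ c ∈ (unionChain Af δ).C,
      (unionChain Af δ).R a c →
      (unionChain Ag δ).R (Hu κ Af Ag Cl ν a) (Hu κ Af Ag Cl ν c) := by
    rintro a haU c hcU ⟨r, hr, hR⟩
    obtain ⟨hma, hmc⟩ := (hAf.mem r (hr.le.trans hδ)).RLC _ _ hR
    obtain ⟨μ0, hμ0, hrμ0⟩ := hcof r hr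
    have hma' : a ∈ (Af (bfs κ Af Ag Cl μ0).1).L := hAf.L_mono hrμ0.le (hiκ μ0 hμ0).le hma
    have hmc' : c ∈ (Af (bfs κ Af Ag Cl μ0).1).C := hAf.C_mono hrμ0.le (hiκ μ0 hμ0).le hmc
    have hR' := (hAf.R_iff hrμ0.le (hiκ μ0 hμ0).le hma hmc).1 hR
    have := (emb_R_iff (hAf.mem _ (hiκ μ0 hμ0).le) (hInj μ0 hμ0) (hSub μ0 hμ0)
      hma' hmc').1 hR'
    refine ⟨_, hjδ μ0 hμ0, ?_⟩
    rw [hWd μ0 hμ0 a (Or.inl hma'), hWd μ0 hμ0 c (Or.inr hmc')]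
    exact this
  refine ⟨hInjU, ?_, fun μ hμ a ha => (hWd μ hμ a ha).symm⟩
  refine ext' ?_ ?_ ?_ ?_
  · apply Set.Subset.antisymm
    · rintro x ⟨a, haL, rfl⟩
      exact hLmem a haL
    · intro y hy
      obtain ⟨a, haL, hay⟩ := hLsurj y hy
      exact ⟨a, haL, hay⟩
  · apply Set.Subset.antisymm
    · rintro x ⟨a, haC, rfl⟩
      exact hCmem a haC
    · intro y hy
      obtain ⟨a, haC, hay⟩ := hCsurj y hy
      exact ⟨a, haC, hay⟩
  · funext x y
    apply propext
    constructor
    · rintro ⟨a, haU, b, hbU, rfl, rfl, hlt⟩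
      exact hltF a haU b hbU hlt
    · intro hlt
      obtain ⟨hxU, hyU⟩ := hAg.union_ltL hδ _ _ hlt
      have hltδ : (Ag δ).lt x y := (hAg.union_lt_iff hδ hxU hyU).1 hlt
      obtain ⟨a, haU, hax⟩ := hLsurj x hxU
      obtain ⟨b, hbU, hby⟩ := hLsurj y hyU
      refine ⟨a, haU, b, hbU, hax, hby, ?_⟩
      obtain ⟨r, hr, haR, hbR⟩ := hAf.unionL_pair hδ haU hbU
      rcases eq_or_ne a b with rfl | hne
      · exfalso
        rw [hax] at hby
        rw [hby] at hltδ
        exact (hAg.mem δ hδ).irrefl' hltδ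
      rcases (hAf.mem r (hr.le.trans hδ)).total a haR b hbR hne with h1 | h1
      · exact ⟨r, hr, h1⟩
      · exfalso
        have : (unionChain Ag δ).lt (Hu κ Af Ag Cl ν b) (Hu κ Af Ag Cl ν a) :=
          hltF b hbU a haU ⟨r, hr, h1⟩
        rw [hax, hby] at this
        have hyU' := hLmem b hbU
        rw [hby] at hyU'
        have hxU' := hLmem a haU
        rw [hax] at hxU'
        have := (hAg.union_lt_iff hδ hyU' hxU').1 this
        exact (hAg.mem δ hδ).asymm hltδ this
  · funext x y
    apply propext
    constructor
    · rintro ⟨a, haU, c, hcU, rfl, rfl, hR⟩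
      exact hRF a haU c hcU hR
    · intro hR
      obtain ⟨hxU, hyU⟩ := hAg.union_RLC hδ _ _ hR
      have hRδ : (Ag δ).R x y := (hAg.union_R_iff hδ hxU hyU).1 hR
      obtain ⟨a, haU, hax⟩ := hLsurj x hxU
      obtain ⟨c, hcU, hcy⟩ := hCsurj y hyU
      obtain ⟨ra, hra, haS⟩ := mem_unionChain_L.1 haU
      obtain ⟨rc, hrc, hcS⟩ := mem_unionChain_C.1 hcU
      obtain ⟨μ0, hμ0, hrμ0⟩ := hcof (max ra rc) (max_lt hra hrc)
      have haS' : a ∈ (Af (bfs κ Af Ag Cl μ0).1).L :=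
        hAf.L_mono ((le_max_left _ _).trans hrμ0.le) (hiκ μ0 hμ0).le haS
      have hcS' : c ∈ (Af (bfs κ Af Ag Cl μ0).1).C :=
        hAf.C_mono ((le_max_right _ _).trans hrμ0.le) (hiκ μ0 hμ0).le hcS
      have hxj : x ∈ (Ag (bfs κ Af Ag Cl μ0).2.1).L := by
        rw [← hax, hWd μ0 hμ0 a (Or.inl haS')]
        exact emb_L_mem (hSub μ0 hμ0) haS'
      have hyj : y ∈ (Ag (bfs κ Af Ag Cl μ0).2.1).C := by
        rw [← hcy, hWd μ0 hμ0 c (Or.inr hcS')]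
        exact emb_C_mem (hSub μ0 hμ0) hcS'
      have hRj : (Ag (bfs κ Af Ag Cl μ0).2.1).R x y :=
        (hAg.R_iff (hjδ μ0 hμ0).le hδ hxj hyj).2 hRδ
      have hRac : (Af (bfs κ Af Ag Cl μ0).1).R a c := by
        rw [emb_R_iff (hAf.mem _ (hiκ μ0 hμ0).le) (hInj μ0 hμ0) (hSub μ0 hμ0) haS' hcS']
        rw [← hWd μ0 hμ0 a (Or.inl haS'), ← hWd μ0 hμ0 c (Or.inr hcS'), hax, hcy]
        exact hRj
      exact ⟨a, haU, c, hcU, hax, hcy, ⟨_, hiδ μ0 hμ0, hRac⟩⟩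

end Main
end GDST

namespace GDST
open Set Function KStr

section Main

variable {κ : Ordinal.{0}} {f g : Ordinal.{0} → Ordinal.{0}}
  {Af Ag : Ordinal.{0} → KStr Ordinal.{0}} {Cl : Set Ordinal.{0}}

/-- The limit-stage extension: an isomorphism of unions extends over the new
block and `C`-point to an isomorphism of the limit stages, provided the blocks
are isomorphic (which follows from `f δ = g δ`). -/
theorem glue (hAf : chainSpec κ f Af) (hAg : chainSpec κ g Ag)
    {δ : Ordinal.{0}} (hδ : δ < κ) (hlim : Order.IsSuccLimit δ) (hfgδ : f δ = g δ)
    {H : Ordinal.{0} → Ordinal.{0}} (hinj : InjOn H (dom (unionChain Af δ)))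
    (heq : mapK H (unionChain Af δ) = unionChain Ag δ) :
    ∃ H', EqOn H H' (dom (unionChain Af δ)) ∧ InjOn H' (dom (Af δ)) ∧
      mapK H' (Af δ) = Ag δ := by
  classical
  obtain ⟨⟨xf, hxfU, hxfC, hxfR⟩, htopf, hblkf⟩ := hAf.limit δ hδ hlim
  obtain ⟨⟨xg, hxgU, hxgC, hxgR⟩, htopg, hblkg⟩ := hAg.limit δ hδ hlim
  rw [← hfgδ] at hblkg
  obtain ⟨m, mbij, mord⟩ := blockIso hblkf hblkg
  have hmf : memK (Af δ) := hAf.mem δ hδ.le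
  have hmg : memK (Ag δ) := hAg.mem δ hδ.le
  -- transfers along H at the union level
  have hHL : H '' (unionChain Af δ).L = (unionChain Ag δ).L := congrArg KStr.L heq
  have hHC : H '' (unionChain Af δ).C = (unionChain Ag δ).C := congrArg KStr.C heq
  have hHdom : H '' dom (unionChain Af δ) = dom (unionChain Ag δ) := by
    rw [← dom_mapK, heq]
  have hHLmem : ∀ a ∈ (unionChain Af δ).L, H a ∈ (unionChain Ag δ).L := by
    intro a ha; rw [← hHL]; exact mem_image_of_mem _ ha
  have hHCmem : ∀ a ∈ (unionChain Af δ).C, H a ∈ (unionChain Ag δ).C := by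
    intro a ha; rw [← hHC]; exact mem_image_of_mem _ ha
  have hHlt : ∀ a ∈ (unionChain Af δ).L, ∀ b ∈ (unionChain Af δ).L,
      ((unionChain Af δ).lt a b ↔ (unionChain Ag δ).lt (H a) (H b)) := by
    intro a ha b hb
    rw [← heq]
    exact (mapK_lt_iff (hAf.union_ltL hδ.le) hinj (Or.inl ha) (Or.inl hb)).symm
  have hHR : ∀ a ∈ (unionChain Af δ).L, ∀ c ∈ (unionChain Af δ).C,
      ((unionChain Af δ).R a c ↔ (unionChain Ag δ).R (H a) (H c)) := by
    intro a ha c hc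
    rw [← heq]
    exact (mapK_R_iff (hAf.union_RLC hδ.le) hinj (Or.inl ha) (Or.inr hc)).symm
  -- the blocks and the partition of the limit stage
  set blkf := (Af δ).L \ (unionChain Af δ).L with hblkf_def
  set blkg := (Ag δ).L \ (unionChain Ag δ).L with hblkg_def
  have hULf : (unionChain Af δ).L ⊆ (Af δ).L := hAf.unionL_sub hδ.le
  have hULg : (unionChain Ag δ).L ⊆ (Ag δ).L := hAg.unionL_sub hδ.le
  have hLsplitf : (Af δ).L = (unionChain Af δ).L ∪ blkf := (Set.union_diff_cancel hULf).symm
  have hLsplitg : (Ag δ).L = (unionChain Ag δ).L ∪ blkg := (Set.union_diff_cancel hULg).symm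
  have hxfCd : xf ∈ (Af δ).C := by rw [hxfC]; exact Or.inr rfl
  have hxgCd : xg ∈ (Ag δ).C := by rw [hxgC]; exact Or.inr rfl
  have hblkf_nU : ∀ z ∈ blkf, z ∉ dom (unionChain Af δ) := by
    rintro z hz (h | h)
    · exact hz.2 h
    · exact hmf.notC hz.1 (hAf.unionC_sub hδ.le h)
  have hblkg_nU : ∀ z ∈ blkg, z ∉ dom (unionChain Ag δ) := by
    rintro z hz (h | h)
    · exact hz.2 h
    · exact hmg.notC hz.1 (hAg.unionC_sub hδ.le h)
  have hxf_nU : xf ∉ dom (unionChain Af δ) := by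
    rintro (h | h)
    · exact hmf.notL hxfCd (hULf h)
    · exact hxfU h
  have hxg_nU : xg ∉ dom (unionChain Ag δ) := by
    rintro (h | h)
    · exact hmg.notL hxgCd (hULg h)
    · exact hxgU h
  have hxf_nblk : xf ∉ blkf := fun h => hmf.notL hxfCd h.1
  have hxg_nblk : xg ∉ blkg := fun h => hmg.notL hxgCd h.1
  -- the extension
  set H' : Ordinal.{0} → Ordinal.{0} := fun z =>
    if z ∈ dom (unionChain Af δ) then H z else if z ∈ blkf then m z else xg with hH'
  have hH'U : ∀ z ∈ dom (unionChain Af δ), H' z = H z := by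
    intro z hz; rw [hH']; simp only [if_pos hz]
  have hH'blk : ∀ z ∈ blkf, H' z = m z := by
    intro z hz
    rw [hH']
    simp only [if_neg (hblkf_nU z hz), if_pos hz]
  have hH'xf : H' xf = xg := by
    rw [hH']
    simp only [if_neg hxf_nU, if_neg hxf_nblk]
  -- case analysis on the domain
  have hcase : ∀ z ∈ dom (Af δ), z ∈ dom (unionChain Af δ) ∨ z ∈ blkf ∨ z = xf := by
    rintro z (hz | hz)
    · rw [hLsplitf] at hz
      rcases hz with h | h
      · exact Or.inl (Or.inl h)
      · exact Or.inr (Or.inl h)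
    · rw [hxfC] at hz
      rcases hz with h | h
      · exact Or.inl (Or.inr h)
      · exact Or.inr (Or.inr h)
  -- values land in disjoint regions
  have hvalU : ∀ z ∈ dom (unionChain Af δ), H' z ∈ dom (unionChain Ag δ) := by
    intro z hz; rw [hH'U z hz, ← hHdom]; exact mem_image_of_mem _ hz
  have hvalblk : ∀ z ∈ blkf, H' z ∈ blkg := by
    intro z hz; rw [hH'blk z hz]; exact mbij.mapsTo hz
  -- injectivity
  have hInj' : InjOn H' (dom (Af δ)) := by
    intro z hz w hw hzw
    rcases hcase z hz with h1 | h1 | h1 <;> rcases hcase w hw with h2 | h2 | h2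
    · rw [hH'U z h1, hH'U w h2] at hzw
      exact hinj h1 h2 hzw
    · exact absurd (hzw ▸ hvalU z h1) (fun h => hblkg_nU _ (hvalblk w h2) (hzw ▸ h))
    · exfalso
      rw [h2, hH'xf] at hzw
      exact hxg_nU (hzw ▸ hvalU z h1)
    · exfalso
      exact hblkg_nU _ (hvalblk z h1) (hzw.symm ▸ hvalU w h2)
    · rw [hH'blk z h1, hH'blk w h2] at hzw
      exact mbij.injOn h1 h2 hzw
    · exfalso
      rw [h2, hH'xf] at hzw
      exact hxg_nblk (hzw ▸ hvalblk z h1)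
    · exfalso
      rw [h1, hH'xf] at hzw
      exact hxg_nU (hzw.symm ▸ hvalU w h2)
    · exfalso
      rw [h1, hH'xf] at hzw
      exact hxg_nblk (hzw.symm ▸ hvalblk w h2)
    · rw [h1, h2]
  -- the bijections on L and C
  have hLbij : BijOn H' (Af δ).L (Ag δ).L := by
    refine ⟨?_, fun a ha b hb => hInj' (Or.inl ha) (Or.inl hb), ?_⟩
    · intro z hz
      rw [hLsplitf] at hz
      rcases hz with h | h
      · rw [hH'U z (Or.inl h)]
        exact hULg (hHLmem z h)
      · exact (hvalblk z h).1
    · intro y hy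
      rw [hLsplitg] at hy
      rcases hy with h | h
      · obtain ⟨a, ha, rfl⟩ := hHL ▸ h
        exact ⟨a, hULf ha, hH'U a (Or.inl ha)⟩
      · obtain ⟨a, ha, rfl⟩ := mbij.surjOn h
        exact ⟨a, ha.1, hH'blk a ha⟩
  have hCbij : BijOn H' (Af δ).C (Ag δ).C := by
    refine ⟨?_, fun a ha b hb => hInj' (Or.inr ha) (Or.inr hb), ?_⟩
    · intro z hz
      rw [hxfC] at hz
      rcases hz with h | h
      · rw [hH'U z (Or.inr h), hxgC]
        exact Or.inl (hHCmem z h)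
      · rw [h, hH'xf, hxgC]
        exact Or.inr rfl
    · intro y hy
      rw [hxgC] at hy
      rcases hy with h | h
      · obtain ⟨a, ha, rfl⟩ := hHC ▸ h
        refine ⟨a, ?_, hH'U a (Or.inr ha)⟩
        rw [hxfC]; exact Or.inl ha
      · exact ⟨xf, hxfCd, by rw [h, hH'xf]⟩
  -- order preservation
  have hlt' : ∀ a ∈ (Af δ).L, ∀ b ∈ (Af δ).L, (Af δ).lt a b →
      (Ag δ).lt (H' a) (H' b) := by
    intro a ha b hb hab
    rw [hLsplitf] at ha hb
    rcases ha with ha | ha <;> rcases hb with hb | hb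
    · have h1 : (unionChain Af δ).lt a b := (hAf.union_lt_iff hδ.le ha hb).2 hab
      have h2 := (hHlt a ha b hb).1 h1
      rw [hH'U a (Or.inl ha), hH'U b (Or.inl hb)]
      exact (hAg.union_lt_iff hδ.le (hHLmem a ha) (hHLmem b hb)).1 h2
    · rw [hH'U a (Or.inl ha), hH'blk b hb]
      exact htopg (m b) (mbij.mapsTo hb) (H a) (hHLmem a ha)
    · exact absurd hab (fun h => hmf.asymm h (htopf a ha b hb))
    · rw [hH'blk a ha, hH'blk b hb]
      exact (mord a ha b hb).1 hab
  -- R preservation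
  have hR' : ∀ a ∈ (Af δ).L, ∀ c ∈ (Af δ).C, ((Af δ).R a c ↔ (Ag δ).R (H' a) (H' c)) := by
    intro a ha c hc
    rw [hxfC] at hc
    rcases hc with hc | hc
    · -- old C-point
      rw [hLsplitf] at ha
      rcases ha with ha | ha
      · rw [hH'U a (Or.inl ha), hH'U c (Or.inr hc)]
        rw [← hAf.union_R_iff hδ.le ha hc, hHR a ha c hc]
        exact hAg.union_R_iff hδ.le (hHLmem a ha) (hHCmem c hc)
      · constructor
        · intro h
          exact absurd h (hAf.block_not_R hδ.le htopf ha hc)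
        · intro h
          exfalso
          rw [hH'blk a ha, hH'U c (Or.inr hc)] at h
          exact hAg.block_not_R hδ.le htopg (mbij.mapsTo ha) (hHCmem c hc) h
    · -- the new C-point
      rw [hc, hH'xf, hxfR, hxgR]
      rw [hLsplitf] at ha
      rcases ha with ha | ha
      · rw [hH'U a (Or.inl ha)]
        exact iff_of_true ha (hHLmem a ha)
      · refine iff_of_false ha.2 ?_
        intro h
        exact (hvalblk a ha).2 h
  refine ⟨H', fun z hz => (hH'U z hz).symm, hInj', ?_⟩
  exact mapK_eq_of_iso hmf hmg hLbij hCbij hlt' hR'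

end Main
end GDST

namespace GDST
open Set Function KStr

section Main

variable {κ : Ordinal.{0}} {f g : Ordinal.{0} → Ordinal.{0}}
  {Af Ag : Ordinal.{0} → KStr Ordinal.{0}} {Cl : Set Ordinal.{0}}

theorem exists_limit (hAf : chainSpec κ f Af) (hAg : chainSpec κ g Ag)
    (hCl : clubIn Cl κ) (hfg : ∀ α ∈ Cl, f α = g α)
    (hcofκ : ∀ ν', ν' < κ → ν'.card < κ.cof)
    {ν : Ordinal.{0}} (hν : ν < κ) (hlim : Order.IsSuccLimit ν)
    (hIH : ∀ μ (hμ : μ < ν), Phi κ Af Ag Cl μ (fun μ' _ => bfs κ Af Ag Cl μ') (bfs κ Af Ag Cl μ)) :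
    ∃ s, Phi κ Af Ag Cl ν (fun μ _ => bfs κ Af Ag Cl μ) s := by
  set δ := Ordinal.bsup ν (fun μ (_ : μ < ν) => (bfs κ Af Ag Cl μ).1) with hδdef
  have hsucc : ∀ μ, μ < ν → μ + 1 < ν := fun μ h => add_one_lt_limit hlim h
  have hstep : ∀ μ (hμ : μ < ν), (bfs κ Af Ag Cl μ).1 < (bfs κ Af Ag Cl (μ+1)).1 ∧
      (bfs κ Af Ag Cl μ).2.1 < (bfs κ Af Ag Cl (μ+1)).1 := by
    intro μ hμ
    have h := (hIH (μ+1) (hsucc μ hμ)).2.2.2.2.2.2.2 μ (lt_add_one_of_le le_rfl)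
    exact ⟨h.1, h.2.1⟩
  have hiδ : ∀ μ (_ : μ < ν), (bfs κ Af Ag Cl μ).1 < δ := by
    intro μ hμ
    exact lt_of_lt_of_le (hstep μ hμ).1 (Ordinal.le_bsup _ (μ+1) (hsucc μ hμ))
  have hjδ : ∀ μ (_ : μ < ν), (bfs κ Af Ag Cl μ).2.1 < δ := by
    intro μ hμ
    exact lt_of_lt_of_le (hstep μ hμ).2 (Ordinal.le_bsup _ (μ+1) (hsucc μ hμ))
  have hcof : ∀ r, r < δ → ∃ μ, ∃ _ : μ < ν, r < (bfs κ Af Ag Cl μ).1 := by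
    intro r hr
    rw [hδdef, Ordinal.lt_bsup] at hr
    obtain ⟨μ, hμ, h⟩ := hr
    exact ⟨μ, hμ, h⟩
  have hδκ : δ < κ := Ordinal.bsup_lt_ord (hcofκ ν hν) (fun μ hμ => (hIH μ hμ).1)
  have hνδ : ν ≤ δ := by
    apply le_of_forall_lt
    intro μ hμ
    exact lt_of_le_of_lt (hIH μ hμ).2.2.1 (hiδ μ hμ)
  have hδpos : 0 < δ := hlim.pos.trans_le hνδ
  have hδlim : Order.IsSuccLimit δ := by
    refine Ordinal.isSuccLimit_iff.2 ⟨hδpos.ne', Order.isSuccPrelimit_of_succ_lt ?_⟩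
    intro r hr
    obtain ⟨μ, hμ, hrμ⟩ := hcof r hr
    exact lt_of_le_of_lt (Order.succ_le_of_lt hrμ) (hiδ μ hμ)
  have hδCl : δ ∈ Cl := by
    apply hCl.2 δ hδκ hδpos
    intro β hβ
    obtain ⟨μ, hμ, hβμ⟩ := hcof β hβ
    exact ⟨(bfs κ Af Ag Cl μ).2.1, (hIH μ hμ).2.2.2.2.1,
      hβμ.le.trans (hIH μ hμ).2.2.2.1, hjδ μ hμ⟩
  obtain ⟨hInjU, hUeq, hUeqOn⟩ := unionMap hAf hAg hν.le hδκ.le hIH hsucc hiδ hjδ hcof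
  obtain ⟨H', hEq, hInj', hmapeq⟩ := glue hAf hAg hδκ hδlim (hfg δ hδCl) hInjU hUeq
  have hdomU : ∀ μ (hμ : μ < ν), dom (Af (bfs κ Af Ag Cl μ).1) ⊆ dom (unionChain Af δ) := by
    intro μ hμ a ha
    exact mem_unionChain_dom.2 ⟨_, hiδ μ hμ, ha⟩
  refine ⟨(δ, δ, H'), hδκ, hδκ, hνδ, le_rfl, hδCl, hInj', ?_, ?_⟩
  · show strongSub (mapK H' (Af δ)) (Ag δ)
    rw [hmapeq]
    exact strongSub_refl (hAg.mem δ hδκ.le)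
  · intro μ hμ
    refine ⟨hiδ μ hμ, hjδ μ hμ, hjδ μ hμ, ?_, ?_⟩
    · intro a ha
      show (bfs κ Af Ag Cl μ).2.2 a = H' a
      exact (hUeqOn μ hμ ha).trans (hEq (hdomU μ hμ ha))
    · intro b hb
      have hcov := (hIH (μ+1) (hsucc μ hμ)).2.2.2.2.2.2.2 μ (lt_add_one_of_le le_rfl)
      obtain ⟨a, ha, hab⟩ := hcov.2.2.2.2 hb
      refine ⟨a, hAf.dom_mono (hiδ (μ+1) (hsucc μ hμ)).le hδκ.le ha, ?_⟩
      have h2 : (bfs κ Af Ag Cl (μ+1)).2.2 a = H' a :=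
        (hUeqOn (μ+1) (hsucc μ hμ) ha).trans (hEq (hdomU (μ+1) (hsucc μ hμ) ha))
      show H' a = b
      rw [← h2]
      exact hab

theorem main_phi (hAf : chainSpec κ f Af) (hAg : chainSpec κ g Ag)
    (hCl : clubIn Cl κ) (hfg : ∀ α ∈ Cl, f α = g α)
    (hlimκ : Order.IsSuccLimit κ) (hcofκ : ∀ ν', ν' < κ → ν'.card < κ.cof) :
    ∀ ν, ν < κ → Phi κ Af Ag Cl ν (fun μ _ => bfs κ Af Ag Cl μ) (bfs κ Af Ag Cl ν) := by
  intro ν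
  induction ν using Ordinal.induction with
  | _ ν IH =>
    intro hν
    apply bfs_phi
    rcases Ordinal.zero_or_succ_or_isSuccLimit ν with rfl | ⟨ρ, rfl⟩ | hlim
    · exact exists_zero hAf hAg hCl hlimκ.pos _
    · have hρκ : ρ < κ := lt_trans (Order.lt_succ ρ) hν
      have hprev := IH ρ (Order.lt_succ ρ) hρκ
      rw [← Ordinal.add_one_eq_succ]
      exact exists_succ hAf hAg hCl hlimκ hρκ hprev
    · exact exists_limit hAf hAg hCl hfg hcofκ hν hlim (fun μ hμ => IH μ hμ (hμ.trans hν))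

end Main
end GDST

namespace GDST

open KStr
open Set Function

/-- If `f, g : κ → reg(κ)` agree on a club of the inaccessible `κ`, then the dense
linear orders `A^f = (L^{A^f_κ}, <)` and `A^g = (L^{A^g_κ}, <)` obtained from the
construction are isomorphic. -/
theorem club_agreement_isomorphic (κ : Cardinal) (hκ : κ.IsInaccessible)
    (f g : Ordinal → Ordinal)
    (hf : ∀ i < κ.ord, f i ∈ regSet κ.ord) (hg : ∀ i < κ.ord, g i ∈ regSet κ.ord)
    (Af Ag : Ordinal → KStr Ordinal)
    (hAf : chainSpec κ.ord f Af) (hAg : chainSpec κ.ord g Ag)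
    (hclub : ∃ Cl, clubIn Cl κ.ord ∧ ∀ α ∈ Cl, f α = g α) :
    ∃ h : Ordinal → Ordinal, Set.BijOn h (Af κ.ord).L (Ag κ.ord).L ∧
      ∀ x ∈ (Af κ.ord).L, ∀ y ∈ (Af κ.ord).L,
        ((Af κ.ord).lt x y ↔ (Ag κ.ord).lt (h x) (h y)) := by
  obtain ⟨Cl, hCl, hfg⟩ := hclub
  have hreg : κ.IsRegular := hκ.isRegular
  have hℵ : Cardinal.aleph0 ≤ κ := hreg.aleph0_le
  have hlimκ : Order.IsSuccLimit κ.ord := Cardinal.isSuccLimit_ord hℵ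
  have hcofκ : ∀ ν', ν' < κ.ord → ν'.card < κ.ord.cof := by
    intro ν' hν'
    rw [hreg.cof_eq]
    exact Cardinal.lt_ord.1 hν'
  have hMain := main_phi hAf hAg hCl hfg hlimκ hcofκ
  obtain ⟨hInjU, hUeq, -⟩ := unionMap hAf hAg le_rfl le_rfl
    (fun μ hμ => hMain μ hμ)
    (fun μ h => add_one_lt_limit hlimκ h)
    (fun μ hμ => (hMain μ hμ).1)
    (fun μ hμ => (hMain μ hμ).2.1)
    (fun r hr => ⟨r + 1, add_one_lt_limit hlimκ hr,
      lt_of_lt_of_le (lt_add_one_of_le le_rfl) (hMain (r+1) (add_one_lt_limit hlimκ hr)).2.2.1⟩)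
  set HU := Hu κ.ord Af Ag Cl κ.ord with hHUdef
  have hHL : HU '' (unionChain Af κ.ord).L = (unionChain Ag κ.ord).L :=
    congrArg KStr.L hUeq
  have hmemg : ∀ x ∈ (unionChain Af κ.ord).L, HU x ∈ (unionChain Ag κ.ord).L := by
    intro x hx
    rw [← hHL]
    exact mem_image_of_mem _ hx
  refine ⟨HU, ?_, ?_⟩
  · rw [hAf.top.1, hAg.top.1]
    refine ⟨hmemg, hInjU.mono (fun a ha => Or.inl ha), ?_⟩
    intro y hy
    rw [← hHL] at hy
    exact hy
  · intro x hx y hy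
    rw [hAf.top.1] at hx hy
    have h1 : (Af κ.ord).lt x y ↔ (unionChain Af κ.ord).lt x y :=
      (hAf.union_lt_iff le_rfl hx hy).symm
    have h2 : (unionChain Af κ.ord).lt x y ↔ (unionChain Ag κ.ord).lt (HU x) (HU y) := by
      rw [← hUeq]
      exact (mapK_lt_iff (hAf.union_ltL le_rfl) hInjU (Or.inl hx) (Or.inl hy)).symm
    have h3 : (unionChain Ag κ.ord).lt (HU x) (HU y) ↔ (Ag κ.ord).lt (HU x) (HU y) :=
      hAg.union_lt_iff le_rfl (hmemg x hx) (hmemg y hy)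
    exact (h1.trans h2).trans h3

end GDST
end
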